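/- arXiv:1807.00473 — 5 statements merged into one kernel-verified Lean document; each statement's English description precedes it below -/
import Mathlib

section
/- Let H = (V, E) be a connected 3-uniform hypergraph with m edges. Then the vertex cover number satisfies τ(H) ≤ (2m + 1)/3. -/
variable {V : Type*} [Fintype V] [DecidableEq V] [Nonempty V]

/-- Two vertices are adjacent if some edge contains both. -/
def Adj (E : Finset (Finset V)) (u w : V) : Prop := ∃ e ∈ E, u ∈ e ∧ w ∈ e

/-- A hypergraph is connected if any two vertices are joined by a path
(equivalently, by a walk, i.e. a chain of adjacencies). -/
def HConnected (E : Finset (Finset V)) : Prop :=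
  ∀ u w : V, Relation.ReflTransGen (Adj E) u w

/-- A hypergraph is 3-uniform if every edge has exactly 3 vertices. -/
def Uniform3 (E : Finset (Finset V)) : Prop := ∀ e ∈ E, e.card = 3

/-- A cycle `v₁e₁v₂e₂…vₖeₖv₁` (k ≥ 2) in the hypergraph with edge set `E`:
distinct vertices, distinct edges, and `{vᵢ, vᵢ₊₁} ⊆ eᵢ` with indices mod k. -/
structure HCycle (E : Finset (Finset V)) where
  k : ℕ
  two_le : 2 ≤ k
  v : ZMod k → V
  e : ZMod k → Finset V
  v_inj : Function.Injective v
  e_inj : Function.Injective e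
  e_mem : ∀ i, e i ∈ E
  mem_left : ∀ i, v i ∈ e i
  mem_right : ∀ i, v (i + 1) ∈ e i

def HasCycle (E : Finset (Finset V)) : Prop := Nonempty (HCycle E)

/-- A hypertree is a connected acyclic hypergraph. -/
def IsHypertree (E : Finset (Finset V)) : Prop := HConnected E ∧ ¬ HasCycle E

/-- A vertex cover is a set of vertices meeting every edge. -/
def IsVertexCover (E : Finset (Finset V)) (S : Finset V) : Prop :=
  ∀ e ∈ E, ∃ x ∈ S, x ∈ e

/-- The vertex cover number τ: minimum cardinality of a vertex cover. -/
noncomputable def coverNum (E : Finset (Finset V)) : ℕ :=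
  sInf {n | ∃ S : Finset V, IsVertexCover E S ∧ S.card = n}

/-- A matching is a set of pairwise disjoint edges. -/
def IsMatching (E : Finset (Finset V)) (M : Finset (Finset V)) : Prop :=
  M ⊆ E ∧ ∀ e ∈ M, ∀ f ∈ M, e ≠ f → Disjoint e f

/-- The matching number ν: maximum cardinality of a matching. -/
noncomputable def matchNum (E : Finset (Finset V)) : ℕ :=
  sSup {n | ∃ M : Finset (Finset V), IsMatching E M ∧ M.card = n}

/-- A perfect matching is a matching covering every vertex. -/
def HasPerfectMatching (E : Finset (Finset V)) : Prop :=
  ∃ M : Finset (Finset V), IsMatching E M ∧ ∀ x : V, ∃ e ∈ M, x ∈ e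

/-- The degree of a vertex: the number of edges containing it. -/
def hdegree (E : Finset (Finset V)) (x : V) : ℕ := (E.filter fun e => x ∈ e).card

/-- The number of connected components of the hypergraph with vertex set `S`
and edge set `E`: the number of equivalence classes of vertices of `S` under
the equivalence generated by adjacency. -/
noncomputable def numComponents (S : Finset V) (E : Finset (Finset V)) : ℕ :=
  Nat.card (Quotient (Setoid.comap (Subtype.val : {x // x ∈ S} → V)
    (Relation.EqvGen.setoid (Adj E))))

/-- `C` is a connected component of the hypergraph with vertex set `S` and edge
set `E` : a nonempty subset of `S`, closed under reachability, any two of whose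
vertices are joined by a path. -/
def IsComponent (S : Finset V) (E : Finset (Finset V)) (C : Finset V) : Prop :=
  C ⊆ S ∧ C.Nonempty ∧
  (∀ x ∈ C, ∀ y ∈ S, Relation.ReflTransGen (Adj E) x y → y ∈ C) ∧
  (∀ x ∈ C, ∀ y ∈ C, Relation.ReflTransGen (Adj E) x y)

/-- A cycle is minimal if any two non-adjacent edges of it are disjoint. -/
def IsMinimalCycle {E : Finset (Finset V)} (C : HCycle E) : Prop :=
  ∀ i j : ZMod C.k, j ≠ i → j ≠ i + 1 → i ≠ j + 1 → Disjoint (C.e i) (C.e j)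

/-- Two cycles share a common vertex. -/
def ShareVertex {E : Finset (Finset V)} (C₁ C₂ : HCycle E) : Prop :=
  ∃ x : V, (∃ i, x ∈ C₁.e i) ∧ (∃ j, x ∈ C₂.e j)

/-- Auxiliary: two edges of `F` are adjacent if they intersect. -/
def eadj (F : Finset (Finset V)) (a b : Finset V) : Prop :=
  a ∈ F ∧ b ∈ F ∧ (a ∩ b).Nonempty

lemma eadj_symm {F : Finset (Finset V)} {a b : Finset V} (h : eadj F a b) : eadj F b a :=
  ⟨h.2.1, h.1, by rw [Finset.inter_comm]; exact h.2.2⟩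

/-- Auxiliary: edges reachable from `g₀` within `n` steps in the intersection graph. -/
def reachN (F : Finset (Finset V)) (g₀ : Finset V) : ℕ → Finset V → Prop
  | 0 => fun e => e = g₀
  | n+1 => fun e => reachN F g₀ n e ∨ ∃ a, reachN F g₀ n a ∧ eadj F a e

lemma exists_reachN_of_rtg {F : Finset (Finset V)} {g₀ e : Finset V}
    (h : Relation.ReflTransGen (eadj F) g₀ e) : ∃ n, reachN F g₀ n e := by
  induction h with
  | refl => exact ⟨0, rfl⟩
  | tail _ hbc ih =>
    obtain ⟨n, hn⟩ := ih
    exact ⟨n + 1, Or.inr ⟨_, hn, hbc⟩⟩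

/-- Auxiliary: the key covering lemma, proved by strong induction on the number
of edges: every (intersection-)connected 3-uniform hypergraph `F` has a vertex
cover `S` with `3|S| ≤ 2|F| + 1`. -/
lemma main_cover : ∀ (m : ℕ) (F : Finset (Finset V)), F.card ≤ m →
    (∀ e ∈ F, e.card = 3) →
    (∀ e ∈ F, ∀ f ∈ F, Relation.ReflTransGen (eadj F) e f) →
    ∃ S : Finset V, IsVertexCover F S ∧ 3 * S.card ≤ 2 * F.card + 1 := by
  intro m
  induction m with
  | zero =>
    intro F hcard _ _
    have hF : F = ∅ := Finset.card_eq_zero.mp (Nat.le_zero.mp hcard)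
    subst hF
    exact ⟨∅, fun e he => absurd he (Finset.notMem_empty e), by simp⟩
  | succ m ih =>
    intro F hcard h3 hconn
    classical
    by_cases hsmall : F.card ≤ m
    · exact ih F hsmall h3 hconn
    by_cases h0 : F = ∅
    · subst h0
      exact ⟨∅, fun e he => absurd he (Finset.notMem_empty e), by simp⟩
    by_cases h1 : F.card = 1
    · obtain ⟨e, he⟩ := Finset.card_eq_one.mp h1
      subst he
      have hene : e.Nonempty := Finset.card_pos.mp
        (by rw [h3 e (Finset.mem_singleton_self e)]; omega)
      obtain ⟨x, hx⟩ := hene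
      refine ⟨{x}, ?_, by simp⟩
      intro g hg
      rw [Finset.mem_singleton] at hg
      exact ⟨x, Finset.mem_singleton_self x, hg ▸ hx⟩
    have hF2 : 2 ≤ F.card := by
      have := Finset.card_pos.mpr (Finset.nonempty_of_ne_empty h0)
      omega
    obtain ⟨g₀, hg₀⟩ := Finset.card_pos.mp (by omega : 0 < F.card)
    have hex : ∀ e ∈ F, ∃ n, reachN F g₀ n e := fun e he =>
      exists_reachN_of_rtg (hconn g₀ hg₀ e he)
    set d : Finset V → ℕ := fun e => sInf {n | reachN F g₀ n e} with hd_def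
    have d_spec : ∀ e ∈ F, reachN F g₀ (d e) e := fun e he => Nat.sInf_mem (hex e he)
    have d_le : ∀ (e : Finset V) (n : ℕ), reachN F g₀ n e → d e ≤ n :=
      fun e n h => Nat.sInf_le h
    have d_g₀ : d g₀ = 0 := Nat.le_zero.mp (d_le g₀ 0 rfl)
    have d_zero : ∀ e ∈ F, d e = 0 → e = g₀ := by
      intro e he h
      have hr := d_spec e he
      rw [h] at hr
      exact hr
    have parent : ∀ e ∈ F, ∀ n : ℕ, d e = n + 1 →
        ∃ a, a ∈ F ∧ d a ≤ n ∧ (a ∩ e).Nonempty := by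
      intro e he n hn
      have hr := d_spec e he
      rw [hn] at hr
      rcases hr with hr | ⟨a, hra, hadj⟩
      · exact absurd (d_le e n hr) (by omega)
      · exact ⟨a, hadj.1, d_le a n hra, hadj.2.2⟩
    obtain ⟨etop, hetopF, hetopD⟩ :=
      Finset.exists_mem_eq_sup F (Finset.card_pos.mp (by omega)) d
    set D : ℕ := F.sup d with hD_def
    have hDle : ∀ e ∈ F, d e ≤ D := fun e he => Finset.le_sup he
    have hD1 : 1 ≤ D := by
      by_contra hD0
      have hall : ∀ e ∈ F, e = g₀ := fun e he => d_zero e he (by have := hDle e he; omega)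
      have hsub : F ⊆ {g₀} := fun e he => Finset.mem_singleton.mpr (hall e he)
      have := Finset.card_le_card hsub
      simp only [Finset.card_singleton] at this
      omega
    obtain ⟨f, hfF, hdf_le, hfh⟩ := parent etop hetopF (D - 1) (by omega)
    have hdf_ge : D ≤ d f + 1 := by
      have hr : reachN F g₀ (d f + 1) etop := Or.inr ⟨f, d_spec f hfF, ⟨hfF, hetopF, hfh⟩⟩
      have := d_le etop _ hr
      omega
    have hdf : d f = D - 1 := by omega
    set L : Finset (Finset V) := F.filter (fun e => d e = D ∧ (e ∩ f).Nonempty) with hL_def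
    have hLF : L ⊆ F := Finset.filter_subset _ _
    have hhL : etop ∈ L := Finset.mem_filter.mpr
      ⟨hetopF, by omega, by rwa [Finset.inter_comm]⟩
    have hfL : f ∉ L := by
      intro hc
      have := (Finset.mem_filter.mp hc).2.1
      omega
    have hg₀L : g₀ ∉ L := by
      intro hc
      have := (Finset.mem_filter.mp hc).2.1
      rw [d_g₀] at this
      omega
    have hL1 : 1 ≤ L.card := Finset.card_pos.mpr ⟨etop, hhL⟩
    set pk : Finset V → V :=
      fun l => if hx : (l ∩ f).Nonempty then hx.choose else Classical.arbitrary V with hpk_def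
    have hpk : ∀ l ∈ L, pk l ∈ l ∧ pk l ∈ f := by
      intro l hl
      have hx : (l ∩ f).Nonempty := (Finset.mem_filter.mp hl).2.2
      have hmem : pk l ∈ l ∩ f := by
        simp only [hpk_def, dif_pos hx]
        exact hx.choose_spec
      exact ⟨(Finset.mem_inter.mp hmem).1, (Finset.mem_inter.mp hmem).2⟩
    set X : Finset V := L.image pk with hX_def
    have hXf : X ⊆ f := by
      intro x hx
      obtain ⟨l, hl, rfl⟩ := Finset.mem_image.mp hx
      exact (hpk l hl).2
    have hX3 : X.card ≤ 3 := by
      have := Finset.card_le_card hXf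
      rwa [h3 f hfF] at this
    have hXL : X.card ≤ L.card := Finset.card_image_le
    have hXne : X.Nonempty := ⟨pk etop, Finset.mem_image_of_mem pk hhL⟩
    -- rooted connectivity of F \ L
    have connFL : ∀ e ∈ F \ L, Relation.ReflTransGen (eadj (F \ L)) g₀ e := by
      have aux : ∀ n : ℕ, ∀ e ∈ F \ L, d e ≤ n →
          Relation.ReflTransGen (eadj (F \ L)) g₀ e := by
        intro n
        induction n with
        | zero =>
          intro e he hle
          obtain rfl := d_zero e (Finset.mem_sdiff.mp he).1 (Nat.le_zero.mp hle)
          exact Relation.ReflTransGen.refl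
        | succ n ihn =>
          intro e he hle
          by_cases hle' : d e ≤ n
          · exact ihn e he hle'
          have hdeF := (Finset.mem_sdiff.mp he).1
          obtain ⟨a, haF, hda, hae⟩ := parent e hdeF n (by omega)
          have haL : a ∉ L := by
            intro hc
            have := (Finset.mem_filter.mp hc).2.1
            have := hDle e hdeF
            omega
          have haFL : a ∈ F \ L := Finset.mem_sdiff.mpr ⟨haF, haL⟩
          exact (ihn a haFL hda).tail ⟨haFL, he, hae⟩
      exact fun e he => aux (d e) e he le_rfl
    -- rooted connectivity of F \ (insert f L)
    set E' : Finset (Finset V) := F \ insert f L with hE'_def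
    have connE' : ∀ e ∈ E', Relation.ReflTransGen (eadj E') g₀ e := by
      have aux : ∀ n : ℕ, ∀ e ∈ E', d e ≤ n →
          Relation.ReflTransGen (eadj E') g₀ e := by
        intro n
        induction n with
        | zero =>
          intro e he hle
          obtain rfl := d_zero e (Finset.mem_sdiff.mp he).1 (Nat.le_zero.mp hle)
          exact Relation.ReflTransGen.refl
        | succ n ihn =>
          intro e he hle
          by_cases hle' : d e ≤ n
          · exact ihn e he hle'
          have hmem := Finset.mem_sdiff.mp he
          have hdeF := hmem.1
          have heL : e ∉ L := fun hc => hmem.2 (Finset.mem_insert_of_mem hc)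
          obtain ⟨a, haF, hda, hae⟩ := parent e hdeF n (by omega)
          have hdeD : d e ≤ D := hDle e hdeF
          have haL : a ∉ L := by
            intro hc
            have := (Finset.mem_filter.mp hc).2.1
            omega
          have haf : a ≠ f := by
            intro hc
            subst hc
            have heDD : d e = D := by omega
            exact heL (Finset.mem_filter.mpr
              ⟨hdeF, heDD, by rwa [Finset.inter_comm] at hae⟩)
          have haE' : a ∈ E' := Finset.mem_sdiff.mpr ⟨haF, by
            intro hc
            rcases Finset.mem_insert.mp hc with hc | hc
            · exact haf hc
            · exact haL hc⟩
          exact (ihn a haE' hda).tail ⟨haE', he, hae⟩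
      exact fun e he => aux (d e) e he le_rfl
    have symmG : ∀ (G : Finset (Finset V)), Symmetric (eadj G) :=
      fun G a b hab => eadj_symm hab
    have hInsSub : insert f L ⊆ F := Finset.insert_subset hfF hLF
    have hE'card : E'.card + (L.card + 1) = F.card := by
      have := Finset.card_sdiff_add_card_eq_card hInsSub
      rwa [Finset.card_insert_of_notMem hfL] at this
    by_cases hA : 3 * X.card ≤ 2 * L.card + 2
    · -- generic case: cover `f` and all of `L` by `X`, recurse on `E'`
      have hE'le : E'.card ≤ m := by omega
      have hconnE' : ∀ e ∈ E', ∀ f' ∈ E', Relation.ReflTransGen (eadj E') e f' := by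
        intro e he f' hf'
        exact ((@Relation.ReflTransGen.stdSymm _ (eadj E') ⟨fun _ _ h => symmG E' h⟩).symm _ _ (connE' e he)).trans (connE' f' hf')
      obtain ⟨S', hS'cov, hS'card⟩ := ih E' hE'le
        (fun e he => h3 e (Finset.mem_sdiff.mp he).1) hconnE'
      refine ⟨X ∪ S', ?_, ?_⟩
      · intro e he
        by_cases heL : e ∈ L
        · exact ⟨pk e, Finset.mem_union_left _ (Finset.mem_image_of_mem pk heL),
            (hpk e heL).1⟩
        by_cases hef : e = f
        · obtain ⟨x, hx⟩ := hXne
          exact ⟨x, Finset.mem_union_left _ hx, hef ▸ hXf hx⟩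
        · have heE' : e ∈ E' := Finset.mem_sdiff.mpr ⟨he, by
            intro hc
            rcases Finset.mem_insert.mp hc with hc | hc
            · exact hef hc
            · exact heL hc⟩
          obtain ⟨x, hxS', hxe⟩ := hS'cov e heE'
          exact ⟨x, Finset.mem_union_right _ hxS', hxe⟩
      · have := Finset.card_union_le X S'
        omega
    · -- exceptional case: X = f, |L| = 3; recurse on F \ L (which contains f)
      have hX3' : X.card = 3 := by omega
      have hL3 : L.card = 3 := by omega
      have hXeq : X = f := Finset.eq_of_subset_of_card_le hXf (by rw [h3 f hfF, hX3'])
      set E₂ : Finset (Finset V) := F \ L with hE₂_def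
      have hE₂card : E₂.card + L.card = F.card := Finset.card_sdiff_add_card_eq_card hLF
      have hE₂le : E₂.card ≤ m := by omega
      have hconnE₂ : ∀ e ∈ E₂, ∀ f' ∈ E₂, Relation.ReflTransGen (eadj E₂) e f' := by
        intro e he f' hf'
        exact ((@Relation.ReflTransGen.stdSymm _ (eadj E₂) ⟨fun _ _ h => symmG E₂ h⟩).symm _ _ (connFL e he)).trans (connFL f' hf')
      obtain ⟨S₂, hS₂cov, hS₂card⟩ := ih E₂ hE₂le
        (fun e he => h3 e (Finset.mem_sdiff.mp he).1) hconnE₂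
      have hfE₂ : f ∈ E₂ := Finset.mem_sdiff.mpr ⟨hfF, hfL⟩
      obtain ⟨y, hyS₂, hyf⟩ := hS₂cov f hfE₂
      have hyX : y ∈ X := by rw [hXeq]; exact hyf
      refine ⟨S₂ ∪ X, ?_, ?_⟩
      · intro e he
        by_cases heL : e ∈ L
        · exact ⟨pk e, Finset.mem_union_right _ (Finset.mem_image_of_mem pk heL),
            (hpk e heL).1⟩
        · obtain ⟨x, hxS₂, hxe⟩ := hS₂cov e (Finset.mem_sdiff.mpr ⟨he, heL⟩)
          exact ⟨x, Finset.mem_union_left _ hxS₂, hxe⟩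
      · have hsub : S₂ ∪ X ⊆ S₂ ∪ X.erase y := by
          intro x hx
          rcases Finset.mem_union.mp hx with hx | hx
          · exact Finset.mem_union_left _ hx
          · by_cases hxy : x = y
            · exact Finset.mem_union_left _ (hxy ▸ hyS₂)
            · exact Finset.mem_union_right _ (Finset.mem_erase.mpr ⟨hxy, hx⟩)
        have hc1 := Finset.card_le_card hsub
        have hc2 := Finset.card_union_le S₂ (X.erase y)
        have hc3 : (X.erase y).card = 2 := by
          rw [Finset.card_erase_of_mem hyX, hX3']
        omega

/-- Auxiliary: vertex-connectivity gives connectivity of the intersection graph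
of the edges. -/
lemma hconn_pairwise (E : Finset (Finset V)) (h3 : Uniform3 E) (hc : HConnected E) :
    ∀ e ∈ E, ∀ f ∈ E, Relation.ReflTransGen (eadj E) e f := by
  intro e he f hf
  have hene : e.Nonempty := Finset.card_pos.mp (by rw [h3 e he]; omega)
  have hfne : f.Nonempty := Finset.card_pos.mp (by rw [h3 f hf]; omega)
  obtain ⟨u, hu⟩ := hene
  obtain ⟨w, hw⟩ := hfne
  have key : ∀ (u w : V), Relation.ReflTransGen (Adj E) u w →
      ∀ (e : Finset V), e ∈ E → u ∈ e → ∀ (f : Finset V), f ∈ E → w ∈ f →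
      Relation.ReflTransGen (eadj E) e f := by
    intro u w huw
    induction huw with
    | refl =>
      intro e he hu f hf hw
      exact Relation.ReflTransGen.single ⟨he, hf, ⟨u, Finset.mem_inter.mpr ⟨hu, hw⟩⟩⟩
    | @tail b c _ hbc ihh =>
      intro e he hu f hf hw
      obtain ⟨g, hg, hbg, hcg⟩ := hbc
      exact (ihh e he hu g hg hbg).tail ⟨hg, hf, ⟨c, Finset.mem_inter.mpr ⟨hcg, hw⟩⟩⟩
  exact key u w (hc u w) e he hu f hf hw

/-- For every connected 3-uniform hypergraph with m edges,
τ(H) ≤ (2m+1)/3, i.e. 3·τ(H) ≤ 2m + 1. -/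
theorem stmt0 (E : Finset (Finset V)) (h3 : Uniform3 E) (hconn : HConnected E) :
    3 * coverNum E ≤ 2 * E.card + 1 := by
  obtain ⟨S, hcov, hbound⟩ := main_cover E.card E le_rfl h3 (hconn_pairwise E h3 hconn)
  have h1 : coverNum E ≤ S.card := Nat.sInf_le ⟨S, hcov, rfl⟩
  calc 3 * coverNum E ≤ 3 * S.card := Nat.mul_le_mul_left 3 h1
    _ ≤ 2 * E.card + 1 := hbound
end

section
/- Let H = (V, E) be a 3-uniform hypertree with m edges that admits a perfect matching. Then τ(H) = (2m + 1)/3. -/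
variable {V : Type*} [Fintype V] [DecidableEq V] [Nonempty V]

set_option linter.unusedSectionVars false
set_option linter.unusedTactic false

def Gr (E : Finset (Finset V)) : SimpleGraph V where
  Adj u w := u ≠ w ∧ Adj E u w
  symm := by
    constructor
    rintro u w ⟨h1, e, he, hu, hw⟩
    exact ⟨fun h => h1 h.symm, e, he, hw, hu⟩
  loopless := by constructor; rintro u ⟨h, _⟩; exact h rfl

lemma gr_conn {E : Finset (Finset V)} (hc : HConnected E) : (Gr E).Connected := by
  refine ⟨fun u w => ?_⟩
  induction hc u w with
  | refl => exact SimpleGraph.Reachable.refl _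
  | tail h1 h2 ih =>
    rename_i b c
    by_cases hbc : b = c
    · exact hbc ▸ ih
    · exact ih.trans (SimpleGraph.Adj.reachable ⟨hbc, h2⟩)

noncomputable def dd (E : Finset (Finset V)) (r x : V) : ℕ := (Gr E).dist r x

lemma dd_self (E : Finset (Finset V)) (r : V) : dd E r r = 0 := by
  unfold dd; exact SimpleGraph.dist_self

lemma dd_zero {E : Finset (Finset V)} (hc : HConnected E) {r x : V} (h : dd E r x = 0) :
    r = x := ((gr_conn hc).dist_eq_zero_iff).mp h

lemma dd_step {E : Finset (Finset V)} (hc : HConnected E) {r : V} {e : Finset V} {x y : V}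
    (he : e ∈ E) (hx : x ∈ e) (hy : y ∈ e) : dd E r y ≤ dd E r x + 1 := by
  by_cases hxy : x = y
  · subst hxy; omega
  · have h1 : (Gr E).dist x y = 1 :=
      SimpleGraph.dist_eq_one_iff_adj.mpr ⟨hxy, e, he, hx, hy⟩
    have := (gr_conn hc).dist_triangle (u := r) (v := x) (w := y)
    unfold dd
    omega

lemma dd_pred {E : Finset (Finset V)} (hc : HConnected E) {r y : V} (hy : y ≠ r) :
    ∃ e ∈ E, y ∈ e ∧ ∃ x ∈ e, dd E r x + 1 = dd E r y := by
  have hre : (Gr E).Reachable y r := (gr_conn hc).preconnected y r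
  obtain ⟨p, hp⟩ := hre.exists_walk_length_eq_dist
  obtain ⟨w, hadj, p', rfl⟩ := SimpleGraph.Walk.exists_eq_cons_of_ne hy p
  obtain ⟨hne, e, he, hye, hwe⟩ := hadj
  refine ⟨e, he, hye, w, hwe, ?_⟩
  have h1 : (Gr E).dist w r ≤ p'.length := SimpleGraph.dist_le p'
  have hp : p'.length + 1 = (Gr E).dist y r := hp
  have h3 : (Gr E).dist y r = (Gr E).dist r y := SimpleGraph.dist_comm
  have h4 : (Gr E).dist w r = (Gr E).dist r w := SimpleGraph.dist_comm
  have h5 : dd E r y ≤ dd E r w + 1 := dd_step hc he hwe hye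
  unfold dd at *
  omega

lemma hasCycle_of_fn (E : Finset (Finset V)) (k : ℕ) (hk : 2 ≤ k)
    (v : ℕ → V) (e : ℕ → Finset V)
    (hvinj : ∀ i < k, ∀ j < k, v i = v j → i = j)
    (heinj : ∀ i < k, ∀ j < k, e i = e j → i = j)
    (heE : ∀ i < k, e i ∈ E)
    (hl : ∀ i < k, v i ∈ e i)
    (hr : ∀ i, i + 1 < k → v (i + 1) ∈ e i)
    (hlast : v 0 ∈ e (k - 1)) : HasCycle E := by
  haveI : NeZero k := ⟨by omega⟩
  refine ⟨⟨k, hk, fun i => v i.val, fun i => e i.val, ?_, ?_, ?_, ?_, ?_⟩⟩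
  · intro i j h
    exact ZMod.val_injective k (hvinj _ (ZMod.val_lt i) _ (ZMod.val_lt j) h)
  · intro i j h
    exact ZMod.val_injective k (heinj _ (ZMod.val_lt i) _ (ZMod.val_lt j) h)
  · intro i; exact heE _ (ZMod.val_lt i)
  · intro i; exact hl _ (ZMod.val_lt i)
  · intro i
    have h1 : (i + 1).val = (i.val + 1) % k := by
      rw [ZMod.val_add, ZMod.val_one_eq_one_mod, Nat.mod_eq_of_lt (show 1 < k by omega)]
    show v ((i + 1).val) ∈ e i.val
    have hv := ZMod.val_lt i
    rcases Nat.lt_or_ge (i.val + 1) k with h | h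
    · rw [h1, Nat.mod_eq_of_lt h]; exact hr _ h
    · have h2 : i.val = k - 1 := by omega
      have h3 : i.val + 1 = k := by omega
      have h0 : (i + 1).val = 0 := by rw [h1, h3, Nat.mod_self]
      rw [h0, h2]; exact hlast

lemma master {E : Finset (Finset V)} (h3 : Uniform3 E) (hc : HConnected E) (r : V) (L : ℕ)
    (x z : V) (hx : dd E r x = L) (hz : dd E r z = L) (hxz : x ≠ z) :
    ∃ (s : ℕ) (c : ℕ → V) (g : ℕ → Finset V),
      1 ≤ s ∧ c 0 = x ∧ c s = z ∧
      (∀ i < s, g i ∈ E ∧ c i ∈ g i ∧ c (i + 1) ∈ g i ∧ ∃ w ∈ g i, dd E r w < L) ∧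
      (∀ i ≤ s, dd E r (c i) ≤ L) ∧
      (∀ i ≤ s, ∀ j ≤ s, c i = c j → i = j) ∧
      (∀ i < s, ∀ j < s, g i = g j → i = j) := by
  classical
  set D : V → ℕ := dd E r with hD
  -- canonical parent edge and parent vertex
  have Hch : ∀ y : V, ∃ (g : Finset V) (p : V), y ≠ r →
      g ∈ E ∧ y ∈ g ∧ p ∈ g ∧ (∀ w ∈ g, D p ≤ D w) ∧ D p + 1 = D y := by
    intro y
    by_cases hy : y = r
    · exact ⟨∅, r, fun h => absurd hy h⟩
    · obtain ⟨e, heE, hye, x0, hx0e, hx0⟩ := dd_pred hc hy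
      obtain ⟨p, hpe, hpmin⟩ := e.exists_min_image D ⟨y, hye⟩
      refine ⟨e, p, fun _ => ⟨heE, hye, hpe, hpmin, ?_⟩⟩
      have h1 : D p ≤ D x0 := hpmin _ hx0e
      have h2 : D y ≤ D p + 1 := dd_step hc heE hpe hye
      have hx0' : D x0 + 1 = D y := hx0
      omega
  choose pe pa hP using Hch
  -- levels along iterated parents
  have hlev : ∀ (v0 : V), D v0 = L → ∀ i ≤ L, D (pa^[i] v0) = L - i := by
    intro v0 h0 i
    induction i with
    | zero => simpa using h0
    | succ n ih =>
      intro hn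
      have hdn : D (pa^[n] v0) = L - n := ih (by omega)
      have hne : pa^[n] v0 ≠ r := by
        intro h
        rw [h] at hdn
        have : D r = 0 := dd_self E r
        omega
      have hstep := (hP _ hne).2.2.2.2
      rw [Function.iterate_succ_apply']
      omega
  set a : ℕ → V := fun i => pa^[i] x with ha_def
  set b : ℕ → V := fun i => pa^[i] z with hb_def
  have hsa : ∀ i, a (i + 1) = pa (a i) := fun i => Function.iterate_succ_apply' pa i x
  have hsb : ∀ i, b (i + 1) = pa (b i) := fun i => Function.iterate_succ_apply' pa i z
  have hmeet : ∃ i, a i = b i := by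
    refine ⟨L, ?_⟩
    have h1 := hlev x hx L le_rfl
    have h2 := hlev z hz L le_rfl
    simp only [Nat.sub_self] at h1 h2
    show pa^[L] x = pa^[L] z
    rw [← dd_zero hc h1, ← dd_zero hc h2]
  set t := Nat.find hmeet with ht_def
  have ht : a t = b t := Nat.find_spec hmeet
  have htmin : ∀ i < t, a i ≠ b i := fun i hi => Nat.find_min hmeet hi
  have htL : t ≤ L := Nat.find_le (by
    have h1 := hlev x hx L le_rfl
    have h2 := hlev z hz L le_rfl
    simp only [Nat.sub_self] at h1 h2
    show pa^[L] x = pa^[L] z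
    rw [← dd_zero hc h1, ← dd_zero hc h2])
  have ht1 : 1 ≤ t := by
    rcases Nat.eq_zero_or_pos t with h | h
    · exfalso; apply hxz; have := ht; rw [h] at this; exact this
    · exact h
  have hla : ∀ i ≤ t, D (a i) = L - i := fun i hi => hlev x hx i (le_trans hi htL)
  have hlb : ∀ i ≤ t, D (b i) = L - i := fun i hi => hlev z hz i (le_trans hi htL)
  have har : ∀ i < t, a i ≠ r := by
    intro i hi h
    have h1 := hla i (le_of_lt hi)
    rw [h] at h1
    have : D r = 0 := dd_self E r
    omega
  have hbr : ∀ i < t, b i ≠ r := by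
    intro i hi h
    have h1 := hlb i (le_of_lt hi)
    rw [h] at h1
    have : D r = 0 := dd_self E r
    omega
  -- parent edge facts
  have hPa : ∀ i < t, pe (a i) ∈ E ∧ a i ∈ pe (a i) ∧ pa (a i) ∈ pe (a i) ∧
      (∀ w ∈ pe (a i), D (pa (a i)) ≤ D w) ∧ D (pa (a i)) + 1 = L - i := by
    intro i hi
    have h := hP _ (har i hi)
    exact ⟨h.1, h.2.1, h.2.2.1, h.2.2.2.1, by rw [h.2.2.2.2]; exact hla i (le_of_lt hi)⟩
  have hPb : ∀ i < t, pe (b i) ∈ E ∧ b i ∈ pe (b i) ∧ pa (b i) ∈ pe (b i) ∧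
      (∀ w ∈ pe (b i), D (pa (b i)) ≤ D w) ∧ D (pa (b i)) + 1 = L - i := by
    intro i hi
    have h := hP _ (hbr i hi)
    exact ⟨h.1, h.2.1, h.2.2.1, h.2.2.2.1, by rw [h.2.2.2.2]; exact hlb i (le_of_lt hi)⟩
  -- equal parent edges have equal min-levels
  have hpeab : ∀ i < t, ∀ j < t, pe (a i) = pe (b j) → i = j := by
    intro i hi j hj h
    have h1 := hPa i hi
    have h2 := hPb j hj
    have e1 : D (pa (a i)) ≤ D (pa (b j)) := h1.2.2.2.1 _ (h ▸ h2.2.2.1)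
    have e2 : D (pa (b j)) ≤ D (pa (a i)) := h2.2.2.2.1 _ (h ▸ h1.2.2.1)
    have := h1.2.2.2.2; have := h2.2.2.2.2
    omega
  have hpeaa : ∀ i < t, ∀ j < t, pe (a i) = pe (a j) → i = j := by
    intro i hi j hj h
    have h1 := hPa i hi
    have h2 := hPa j hj
    have e1 : D (pa (a i)) ≤ D (pa (a j)) := h1.2.2.2.1 _ (h ▸ h2.2.2.1)
    have e2 : D (pa (a j)) ≤ D (pa (a i)) := h2.2.2.2.1 _ (h ▸ h1.2.2.1)
    have := h1.2.2.2.2; have := h2.2.2.2.2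
    omega
  have hpebb : ∀ i < t, ∀ j < t, pe (b i) = pe (b j) → i = j := by
    intro i hi j hj h
    have h1 := hPb i hi
    have h2 := hPb j hj
    have e1 : D (pa (b i)) ≤ D (pa (b j)) := h1.2.2.2.1 _ (h ▸ h2.2.2.1)
    have e2 : D (pa (b j)) ≤ D (pa (b i)) := h2.2.2.2.1 _ (h ▸ h1.2.2.1)
    have := h1.2.2.2.2; have := h2.2.2.2.2
    omega
  -- the quadrilateral lemma: same parent edge forces same parents
  have hquad : ∀ i < t, pe (a i) = pe (b i) → a (i + 1) = b (i + 1) := by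
    intro i hi hpe
    rw [hsa, hsb]
    by_contra hne
    have h1 := hPa i hi
    have h2 := hPb i hi
    have hG3 : (pe (a i)).card = 3 := h3 _ h1.1
    have hsub : ({a i, b i, pa (a i), pa (b i)} : Finset V) ⊆ pe (a i) := by
      intro w hw
      simp only [Finset.mem_insert, Finset.mem_singleton] at hw
      rcases hw with rfl | rfl | rfl | rfl
      · exact h1.2.1
      · exact hpe ▸ h2.2.1
      · exact h1.2.2.1
      · exact hpe ▸ h2.2.2.1
    have hab : a i ≠ b i := htmin i hi
    have l1 : D (a i) = L - i := hla i (le_of_lt hi)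
    have l2 : D (b i) = L - i := hlb i (le_of_lt hi)
    have l3 : D (pa (a i)) + 1 = L - i := h1.2.2.2.2
    have l4 : D (pa (b i)) + 1 = L - i := h2.2.2.2.2
    have n3 : pa (a i) ∉ ({pa (b i)} : Finset V) := by
      simp only [Finset.mem_singleton]; exact hne
    have n2 : b i ∉ ({pa (a i), pa (b i)} : Finset V) := by
      simp only [Finset.mem_insert, Finset.mem_singleton]
      push_neg
      refine ⟨fun h => ?_, fun h => ?_⟩
      · rw [h] at l2; omega
      · rw [h] at l2; omega
    have n1 : a i ∉ ({b i, pa (a i), pa (b i)} : Finset V) := by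
      simp only [Finset.mem_insert, Finset.mem_singleton]
      push_neg
      refine ⟨hab, fun h => ?_, fun h => ?_⟩
      · rw [h] at l1; omega
      · rw [h] at l1; omega
    have hcard : ({a i, b i, pa (a i), pa (b i)} : Finset V).card = 4 := by
      rw [Finset.card_insert_of_notMem n1, Finset.card_insert_of_notMem n2,
        Finset.card_insert_of_notMem n3, Finset.card_singleton]
    have := Finset.card_le_card hsub
    omega
  by_cases htip : pe (a (t - 1)) = pe (b (t - 1))
  · -- tip case: s = 2t - 1
    refine ⟨2 * t - 1, fun i => if i ≤ t - 1 then a i else b (2 * t - 1 - i),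
      fun i => if i ≤ t - 1 then pe (a i) else pe (b (2 * t - 2 - i)), by omega,
      by beta_reduce; rw [if_pos (Nat.zero_le _)]; exact rfl,
      by beta_reduce; rw [if_neg (show ¬(2 * t - 1 ≤ t - 1) by omega), Nat.sub_self]
         exact rfl,
      ?_, ?_, ?_, ?_⟩
    · -- edge bullet
      intro i hi
      beta_reduce
      rcases Nat.lt_or_ge i (t - 1) with h | h
      · have hc1 : i ≤ t - 1 := by omega
        have hc2 : i + 1 ≤ t - 1 := by omega
        simp only [if_pos hc1, if_pos hc2]
        have hit : i < t := by omega
        have hP1 := hPa i hit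
        exact ⟨hP1.1, hP1.2.1, by rw [hsa]; exact hP1.2.2.1,
          ⟨pa (a i), hP1.2.2.1, by have := hP1.2.2.2.2; omega⟩⟩
      rcases Nat.lt_or_ge i t with h2 | h2
      · -- i = t - 1
        have hieq : i = t - 1 := by omega
        subst hieq
        have hP1 := hPa (t - 1) (by omega)
        have hP2 := hPb (t - 1) (by omega)
        have hc1 : t - 1 ≤ t - 1 := le_rfl
        have hc2 : ¬ (t - 1 + 1 ≤ t - 1) := by omega
        simp only [if_pos hc1, if_neg hc2]
        refine ⟨hP1.1, hP1.2.1, ?_,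
          ⟨pa (a (t - 1)), hP1.2.2.1, by have := hP1.2.2.2.2; omega⟩⟩
        have he2 : 2 * t - 1 - (t - 1 + 1) = t - 1 := by omega
        rw [he2, htip]
        exact hP2.2.1
      · -- t ≤ i < 2t - 1
        have hc1 : ¬ (i ≤ t - 1) := by omega
        have hc2 : ¬ (i + 1 ≤ t - 1) := by omega
        simp only [if_neg hc1, if_neg hc2]
        have hnt : 2 * t - 2 - i < t := by omega
        have hP2 := hPb (2 * t - 2 - i) hnt
        have e1 : 2 * t - 1 - i = (2 * t - 2 - i) + 1 := by omega
        have e2 : 2 * t - 1 - (i + 1) = 2 * t - 2 - i := by omega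
        rw [e1, e2, hsb]
        exact ⟨hP2.1, hP2.2.2.1, hP2.2.1,
          ⟨pa (b (2 * t - 2 - i)), hP2.2.2.1, by have := hP2.2.2.2.2; omega⟩⟩
    · -- level bullet
      intro i hi
      beta_reduce
      split_ifs with h
      · have := hla i (by omega); omega
      · have := hlb (2 * t - 1 - i) (by omega); omega
    · -- vertex injectivity
      intro i hi j hj hij
      beta_reduce at hij
      by_contra hne
      have key : ∀ m, m ≤ 2 * t - 1 →
          D (if m ≤ t - 1 then a m else b (2 * t - 1 - m)) = L - min m (2 * t - 1 - m) := by
        intro m hm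
        split_ifs with h
        · have hmin : min m (2 * t - 1 - m) = m := by omega
          rw [hmin]
          exact hla m (by omega)
        · have hmin : min m (2 * t - 1 - m) = 2 * t - 1 - m := by omega
          rw [hmin]
          exact hlb (2 * t - 1 - m) (by omega)
      have k1 := key i hi
      have k2 := key j hj
      rw [hij] at k1
      have hi' : min i (2 * t - 1 - i) ≤ t - 1 := by omega
      have hj' : min j (2 * t - 1 - j) ≤ t - 1 := by omega
      have hq : min i (2 * t - 1 - i) = min j (2 * t - 1 - j) := by omega
      set q := min i (2 * t - 1 - i) with hqd
      have hqt : q < t := by omega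
      have hq1 : q ≤ t - 1 := by omega
      have hq2 : ¬ (2 * t - 1 - q ≤ t - 1) := by omega
      have c1 : (if q ≤ t - 1 then a q else b (2 * t - 1 - q)) = a q := if_pos hq1
      have c2 : (if (2 * t - 1 - q) ≤ t - 1 then a (2 * t - 1 - q)
          else b (2 * t - 1 - (2 * t - 1 - q))) = b q := by
        rw [if_neg hq2]
        congr 1
        omega
      have hcase : (i = q ∧ j = 2 * t - 1 - q) ∨ (j = q ∧ i = 2 * t - 1 - q) := by omega
      rcases hcase with ⟨h1, h2⟩ | ⟨h1, h2⟩
      · rw [h1, h2] at hij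
        rw [c1, c2] at hij
        exact htmin q hqt hij
      · rw [h1, h2] at hij
        rw [c1, c2] at hij
        exact htmin q hqt hij.symm
    · -- edge injectivity
      intro i hi j hj hij
      beta_reduce at hij
      rcases Nat.lt_or_ge i t with hi2 | hi2 <;> rcases Nat.lt_or_ge j t with hj2 | hj2
      · rw [if_pos (show i ≤ t - 1 by omega), if_pos (show j ≤ t - 1 by omega)] at hij
        exact hpeaa i hi2 j hj2 hij
      · rw [if_pos (show i ≤ t - 1 by omega), if_neg (show ¬ (j ≤ t - 1) by omega)] at hij
        have h5 := hpeab i hi2 (2 * t - 2 - j) (by omega) hij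
        exfalso
        have heq : pe (a i) = pe (b i) := by rw [hij, ← h5]
        have h6 := hquad i hi2 heq
        have h7 : ¬ (i + 1 < t) := fun hh => htmin (i + 1) hh h6
        omega
      · rw [if_neg (show ¬ (i ≤ t - 1) by omega), if_pos (show j ≤ t - 1 by omega)] at hij
        have h5 := hpeab j hj2 (2 * t - 2 - i) (by omega) hij.symm
        exfalso
        have heq : pe (a j) = pe (b j) := by rw [hij.symm, ← h5]
        have h6 := hquad j hj2 heq
        have h7 : ¬ (j + 1 < t) := fun hh => htmin (j + 1) hh h6
        omega
      · rw [if_neg (show ¬ (i ≤ t - 1) by omega), if_neg (show ¬ (j ≤ t - 1) by omega)] at hij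
        have := hpebb (2 * t - 2 - i) (by omega) (2 * t - 2 - j) (by omega) hij
        omega
  · -- non-tip case: s = 2t
    refine ⟨2 * t, fun i => if i ≤ t then a i else b (2 * t - i),
      fun i => if i < t then pe (a i) else pe (b (2 * t - 1 - i)), by omega,
      by beta_reduce; rw [if_pos (Nat.zero_le _)]; exact rfl,
      by beta_reduce; rw [if_neg (show ¬(2 * t ≤ t) by omega)]
         rw [show 2 * t - 2 * t = 0 by omega]; exact rfl,
      ?_, ?_, ?_, ?_⟩
    · -- edge bullet
      intro i hi
      beta_reduce
      rcases Nat.lt_or_ge i t with h | h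
      · have hP1 := hPa i h
        have hc1 : i ≤ t := by omega
        have hc2 : i + 1 ≤ t := by omega
        simp only [if_pos h, if_pos hc1, if_pos hc2]
        exact ⟨hP1.1, hP1.2.1, by rw [hsa]; exact hP1.2.2.1,
          ⟨pa (a i), hP1.2.2.1, by have := hP1.2.2.2.2; omega⟩⟩
      · have hc0 : ¬ (i < t) := by omega
        have hc2 : ¬ (i + 1 ≤ t) := by omega
        have hnt : 2 * t - 1 - i < t := by omega
        have hP2 := hPb (2 * t - 1 - i) hnt
        have e2 : 2 * t - (i + 1) = 2 * t - 1 - i := by omega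
        simp only [if_neg hc0, if_neg hc2, e2]
        refine ⟨hP2.1, ?_, hP2.2.1,
          ⟨pa (b (2 * t - 1 - i)), hP2.2.2.1, by have := hP2.2.2.2.2; omega⟩⟩
        rcases Nat.eq_or_lt_of_le h with h2 | h2
        · have hc1 : i ≤ t := by omega
          simp only [if_pos hc1]
          have e3 : a i = b ((2 * t - 1 - i) + 1) := by
            rw [← h2, ht]
            congr 1
            omega
          rw [e3, hsb]
          exact hP2.2.2.1
        · have hc1 : ¬ (i ≤ t) := by omega
          simp only [if_neg hc1]
          have e4 : 2 * t - i = (2 * t - 1 - i) + 1 := by omega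
          rw [e4, hsb]
          exact hP2.2.2.1
    · -- level bullet
      intro i hi
      beta_reduce
      split_ifs with h
      · have := hla i (by omega); omega
      · have := hlb (2 * t - i) (by omega); omega
    · -- vertex injectivity
      intro i hi j hj hij
      beta_reduce at hij
      by_contra hne
      have key : ∀ m, m ≤ 2 * t →
          D (if m ≤ t then a m else b (2 * t - m)) = L - min m (2 * t - m) := by
        intro m hm
        split_ifs with h
        · have hmin : min m (2 * t - m) = m := by omega
          rw [hmin]
          exact hla m (by omega)
        · have hmin : min m (2 * t - m) = 2 * t - m := by omega
          rw [hmin]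
          exact hlb (2 * t - m) (by omega)
      have k1 := key i hi
      have k2 := key j hj
      rw [hij] at k1
      have hi' : min i (2 * t - i) ≤ t := by omega
      have hj' : min j (2 * t - j) ≤ t := by omega
      have hq : min i (2 * t - i) = min j (2 * t - j) := by omega
      set q := min i (2 * t - i) with hqd
      have hqt : q < t := by omega
      have hq1 : q ≤ t := by omega
      have hq2 : ¬ (2 * t - q ≤ t) := by omega
      have c1 : (if q ≤ t then a q else b (2 * t - q)) = a q := if_pos hq1
      have c2 : (if (2 * t - q) ≤ t then a (2 * t - q)
          else b (2 * t - (2 * t - q))) = b q := by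
        rw [if_neg hq2]
        congr 1
        omega
      have hcase : (i = q ∧ j = 2 * t - q) ∨ (j = q ∧ i = 2 * t - q) := by omega
      rcases hcase with ⟨h1, h2⟩ | ⟨h1, h2⟩
      · rw [h1, h2] at hij
        rw [c1, c2] at hij
        exact htmin q hqt hij
      · rw [h1, h2] at hij
        rw [c1, c2] at hij
        exact htmin q hqt hij.symm
    · -- edge injectivity
      intro i hi j hj hij
      beta_reduce at hij
      rcases Nat.lt_or_ge i t with hi2 | hi2 <;> rcases Nat.lt_or_ge j t with hj2 | hj2
      · rw [if_pos hi2, if_pos hj2] at hij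
        exact hpeaa i hi2 j hj2 hij
      · rw [if_pos hi2, if_neg (show ¬ (j < t) by omega)] at hij
        have h5 := hpeab i hi2 (2 * t - 1 - j) (by omega) hij
        exfalso
        have heq : pe (a i) = pe (b i) := by rw [hij, ← h5]
        have h6 := hquad i hi2 heq
        have h7 : ¬ (i + 1 < t) := fun hh => htmin (i + 1) hh h6
        have hi3 : i = t - 1 := by omega
        have hj3 : 2 * t - 1 - j = t - 1 := by omega
        apply htip
        rw [hi3] at hij
        rw [hj3] at hij
        exact hij
      · rw [if_neg (show ¬ (i < t) by omega), if_pos hj2] at hij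
        have h5 := hpeab j hj2 (2 * t - 1 - i) (by omega) hij.symm
        exfalso
        have heq : pe (a j) = pe (b j) := by rw [hij.symm, ← h5]
        have h6 := hquad j hj2 heq
        have h7 : ¬ (j + 1 < t) := fun hh => htmin (j + 1) hh h6
        have hj3 : j = t - 1 := by omega
        have hi3 : 2 * t - 1 - i = t - 1 := by omega
        apply htip
        rw [hj3] at hij
        rw [hi3] at hij
        exact hij.symm
      · rw [if_neg (show ¬ (i < t) by omega), if_neg (show ¬ (j < t) by omega)] at hij
        have := hpebb (2 * t - 1 - i) (by omega) (2 * t - 1 - j) (by omega) hij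
        omega

lemma noA {E : Finset (Finset V)} (h3 : Uniform3 E) (hc : HConnected E)
    (hac : ¬ HasCycle E) (r : V) {e : Finset V} (he : e ∈ E) {x z : V}
    (hx : x ∈ e) (hz : z ∈ e) (hmin : ∀ w ∈ e, dd E r x ≤ dd E r w)
    (hd : dd E r x = dd E r z) : x = z := by
  by_contra hne
  obtain ⟨s, c, g, hs1, hc0, hcs, hedge, hlev, hcinj, hginj⟩ :=
    master h3 hc r (dd E r x) x z rfl hd.symm hne
  apply hac
  apply hasCycle_of_fn E (s + 1) (by omega) c (fun n => if n < s then g n else e)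
  · intro i hi j hj hij
    exact hcinj i (by omega) j (by omega) hij
  · intro i hi j hj hij
    beta_reduce at hij
    rcases Nat.lt_or_ge i s with h1 | h1 <;> rcases Nat.lt_or_ge j s with h2 | h2
    · rw [if_pos h1, if_pos h2] at hij
      exact hginj i h1 j h2 hij
    · exfalso
      rw [if_pos h1, if_neg (by omega)] at hij
      obtain ⟨w, hw, hwlt⟩ := (hedge i h1).2.2.2
      rw [hij] at hw
      exact absurd (hmin w hw) (by omega)
    · exfalso
      rw [if_neg (by omega), if_pos h2] at hij
      obtain ⟨w, hw, hwlt⟩ := (hedge j h2).2.2.2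
      rw [← hij] at hw
      exact absurd (hmin w hw) (by omega)
    · omega
  · intro i hi
    beta_reduce
    split_ifs with h
    · exact (hedge i h).1
    · exact he
  · intro i hi
    beta_reduce
    split_ifs with h
    · exact (hedge i h).2.1
    · have : i = s := by omega
      rw [this, hcs]
      exact hz
  · intro i hi
    beta_reduce
    rw [if_pos (by omega)]
    exact (hedge i (by omega)).2.2.1
  · beta_reduce
    rw [if_neg (by omega), hc0]
    exact hx

lemma noB {E : Finset (Finset V)} (h3 : Uniform3 E) (hc : HConnected E)
    (hac : ¬ HasCycle E) (r : V) {y : V} {e f : Finset V} (he : e ∈ E) (hf : f ∈ E)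
    (hye : y ∈ e) (hyf : y ∈ f) (hex : ∃ x ∈ e, dd E r x < dd E r y)
    (hfz : ∃ z ∈ f, dd E r z < dd E r y) : e = f := by
  by_contra hef
  obtain ⟨x, hxe, hxlt⟩ := hex
  obtain ⟨z, hzf, hzlt⟩ := hfz
  have hxl : dd E r x + 1 = dd E r y := by
    have := dd_step (r := r) hc he hxe hye
    omega
  have hzl : dd E r z + 1 = dd E r y := by
    have := dd_step (r := r) hc hf hzf hyf
    omega
  have hemin : ∀ w ∈ e, dd E r y - 1 ≤ dd E r w := by
    intro w hw
    have := dd_step (r := r) hc he hw hye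
    omega
  have hfmin : ∀ w ∈ f, dd E r y - 1 ≤ dd E r w := by
    intro w hw
    have := dd_step (r := r) hc hf hw hyf
    omega
  by_cases hxz : x = z
  · -- 2-cycle
    apply hac
    apply hasCycle_of_fn E 2 le_rfl (fun n => if n = 0 then y else x)
      (fun n => if n = 0 then e else f)
    · intro i hi j hj hij
      beta_reduce at hij
      have hyx : ¬ (y = x) := fun h => by rw [h] at hxlt; omega
      interval_cases i <;> interval_cases j <;> simp_all
    · intro i hi j hj hij
      beta_reduce at hij
      interval_cases i <;> interval_cases j <;> simp_all
    · intro i hi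
      beta_reduce
      split_ifs
      · exact he
      · exact hf
    · intro i hi
      beta_reduce
      interval_cases i
      · simpa using hye
      · simp only [if_neg (by omega : ¬ (1 = 0))]
        rw [hxz]
        exact hzf
    · intro i hi
      have : i = 0 := by omega
      subst this
      beta_reduce
      simp only [if_neg (by omega : ¬ (1 = 0)), if_pos rfl]
      exact hxe
    · beta_reduce
      simp only [if_pos rfl, if_neg (by omega : ¬ (2 - 1 = 0))]
      exact hyf
  · obtain ⟨s, c, g, hs1, hc0, hcs, hedge, hlev, hcinj, hginj⟩ :=
      master h3 hc r (dd E r y - 1) x z (by omega) (by omega) hxz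
    apply hac
    apply hasCycle_of_fn E (s + 2) (by omega) (fun n => if n = 0 then y else c (n - 1))
      (fun n => if n = 0 then e else if n < s + 1 then g (n - 1) else f)
    · intro i hi j hj hij
      beta_reduce at hij
      rcases Nat.eq_zero_or_pos i with h1 | h1 <;> rcases Nat.eq_zero_or_pos j with h2 | h2
      · omega
      · exfalso
        rw [if_pos h1, if_neg (show ¬ (j = 0) by omega)] at hij
        have := hlev (j - 1) (by omega)
        rw [← hij] at this
        omega
      · exfalso
        rw [if_neg (show ¬ (i = 0) by omega), if_pos h2] at hij
        have := hlev (i - 1) (by omega)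
        rw [hij] at this
        omega
      · rw [if_neg (show ¬ (i = 0) by omega), if_neg (show ¬ (j = 0) by omega)] at hij
        have := hcinj (i - 1) (by omega) (j - 1) (by omega) hij
        omega
    · intro i hi j hj hij
      beta_reduce at hij
      rcases Nat.eq_zero_or_pos i with h1 | h1 <;> rcases Nat.eq_zero_or_pos j with h2 | h2
      · omega
      · exfalso
        rw [if_pos h1, if_neg (show ¬ (j = 0) by omega)] at hij
        rcases Nat.lt_or_ge j (s + 1) with h3 | h3
        · rw [if_pos h3] at hij
          obtain ⟨w, hw, hwlt⟩ := (hedge (j - 1) (by omega)).2.2.2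
          rw [← hij] at hw
          exact absurd (hemin w hw) (by omega)
        · rw [if_neg (show ¬ (j < s + 1) by omega)] at hij
          exact hef hij
      · exfalso
        rw [if_neg (show ¬ (i = 0) by omega), if_pos h2] at hij
        rcases Nat.lt_or_ge i (s + 1) with h3 | h3
        · rw [if_pos h3] at hij
          obtain ⟨w, hw, hwlt⟩ := (hedge (i - 1) (by omega)).2.2.2
          rw [hij] at hw
          exact absurd (hemin w hw) (by omega)
        · rw [if_neg (show ¬ (i < s + 1) by omega)] at hij
          exact hef hij.symm
      · rw [if_neg (show ¬ (i = 0) by omega), if_neg (show ¬ (j = 0) by omega)] at hij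
        rcases Nat.lt_or_ge i (s + 1) with h3 | h3 <;> rcases Nat.lt_or_ge j (s + 1) with h4 | h4
        · rw [if_pos h3, if_pos h4] at hij
          have := hginj (i - 1) (by omega) (j - 1) (by omega) hij
          omega
        · exfalso
          rw [if_pos h3, if_neg (show ¬ (j < s + 1) by omega)] at hij
          obtain ⟨w, hw, hwlt⟩ := (hedge (i - 1) (by omega)).2.2.2
          rw [hij] at hw
          exact absurd (hfmin w hw) (by omega)
        · exfalso
          rw [if_neg (show ¬ (i < s + 1) by omega), if_pos h4] at hij
          obtain ⟨w, hw, hwlt⟩ := (hedge (j - 1) (by omega)).2.2.2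
          rw [← hij] at hw
          exact absurd (hfmin w hw) (by omega)
        · omega
    · intro i hi
      beta_reduce
      rcases Nat.eq_zero_or_pos i with h1 | h1
      · rw [if_pos h1]
        exact he
      · rw [if_neg (show ¬ (i = 0) by omega)]
        rcases Nat.lt_or_ge i (s + 1) with h3 | h3
        · rw [if_pos h3]
          exact (hedge (i - 1) (by omega)).1
        · rw [if_neg (show ¬ (i < s + 1) by omega)]
          exact hf
    · intro i hi
      beta_reduce
      rcases Nat.eq_zero_or_pos i with h1 | h1
      · rw [if_pos h1, if_pos h1]
        exact hye
      · rw [if_neg (show ¬ (i = 0) by omega), if_neg (show ¬ (i = 0) by omega)]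
        rcases Nat.lt_or_ge i (s + 1) with h3 | h3
        · rw [if_pos h3]
          exact (hedge (i - 1) (by omega)).2.1
        · rw [if_neg (show ¬ (i < s + 1) by omega)]
          have : i - 1 = s := by omega
          rw [this, hcs]
          exact hzf
    · intro i hi
      beta_reduce
      rw [if_neg (by omega : ¬ (i + 1 = 0))]
      rcases Nat.eq_zero_or_pos i with h1 | h1
      · rw [if_pos h1]
        have : i + 1 - 1 = 0 := by omega
        rw [this, hc0]
        subst h1
        exact hxe
      · rw [if_neg (show ¬ (i = 0) by omega), if_pos (show i < s + 1 by omega)]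
        have e1 : i + 1 - 1 = (i - 1) + 1 := by omega
        rw [e1]
        exact (hedge (i - 1) (by omega)).2.2.1
    · beta_reduce
      rw [if_pos rfl, if_neg (by omega : ¬ (s + 2 - 1 = 0)), if_neg (by omega : ¬ (s + 2 - 1 < s + 1))]
      exact hyf

/-- A 3-uniform hypertree with m edges admitting a perfect
matching satisfies τ(H) = (2m+1)/3, i.e. 3·τ(H) = 2m + 1. -/
theorem stmt2 (E : Finset (Finset V)) (h3 : Uniform3 E) (htree : IsHypertree E)
    (hpm : HasPerfectMatching E) :
    3 * coverNum E = 2 * E.card + 1 := by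
  classical
  obtain ⟨hc, hac⟩ := htree
  obtain ⟨M, ⟨hME, hMdisj⟩, hMcov⟩ := hpm
  obtain ⟨r⟩ := (inferInstance : Nonempty V)
  have hEne : ∀ e ∈ E, e.Nonempty := by
    intro e heE
    rw [← Finset.card_pos, h3 e heE]
    omega
  -- each edge has exactly two non-minimal vertices
  have hdown : ∀ e ∈ E,
      (e.filter (fun y => ∃ w ∈ e, dd E r w < dd E r y)).card = 2 := by
    intro e heE
    have he3 : e.card = 3 := h3 e heE
    obtain ⟨u, hu, humin⟩ := e.exists_min_image (dd E r) (hEne e heE)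
    have hfe : e.filter (fun y => ∃ w ∈ e, dd E r w < dd E r y) = e.erase u := by
      ext y
      simp only [Finset.mem_filter, Finset.mem_erase]
      constructor
      · rintro ⟨hy, w, hw, hlt⟩
        refine ⟨fun h => ?_, hy⟩
        subst h
        exact absurd (humin w hw) (by omega)
      · rintro ⟨hyne, hy⟩
        refine ⟨hy, u, hu, ?_⟩
        rcases Nat.lt_or_ge (dd E r u) (dd E r y) with h | h
        · exact h
        · exfalso
          apply hyne
          have heq : dd E r u = dd E r y := le_antisymm (humin y hy) h
          exact (noA h3 hc hac r heE hu hy humin heq).symm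
    rw [hfe, Finset.card_erase_of_mem hu, he3]
  -- the down-sets are pairwise disjoint
  have hdisj : ∀ e ∈ E, ∀ f ∈ E, e ≠ f →
      Disjoint (e.filter (fun y => ∃ w ∈ e, dd E r w < dd E r y))
        (f.filter (fun y => ∃ w ∈ f, dd E r w < dd E r y)) := by
    intro e heE f hfE hef
    rw [Finset.disjoint_left]
    intro y hye hyf
    simp only [Finset.mem_filter] at hye hyf
    exact hef (noB h3 hc hac r heE hfE hye.1 hyf.1 hye.2 hyf.2)
  -- the union of the down-sets is everything but the root
  have hbi : E.biUnion (fun e => e.filter (fun y => ∃ w ∈ e, dd E r w < dd E r y))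
      = Finset.univ.erase r := by
    ext y
    simp only [Finset.mem_biUnion, Finset.mem_filter, Finset.mem_erase, Finset.mem_univ,
      and_true]
    constructor
    · rintro ⟨e, heE, hy, w, hw, hlt⟩
      intro h
      have h0 : dd E r y = 0 := by rw [h]; exact dd_self E r
      omega
    · intro hyr
      obtain ⟨e, heE, hye, w, hw, hlt⟩ := dd_pred hc hyr
      exact ⟨e, heE, hye, w, hw, by omega⟩
  have hcount : Fintype.card V = 2 * E.card + 1 := by
    have h1 : (Finset.univ.erase r).card = Fintype.card V - 1 := by
      rw [Finset.card_erase_of_mem (Finset.mem_univ r), Finset.card_univ]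
    have h2 : (E.biUnion (fun e => e.filter (fun y => ∃ w ∈ e, dd E r w < dd E r y))).card
        = 2 * E.card := by
      rw [Finset.card_biUnion hdisj]
      rw [Finset.sum_congr rfl hdown, Finset.sum_const, smul_eq_mul]
      ring
    have h3' : 0 < Fintype.card V := Fintype.card_pos
    rw [hbi, h1] at h2
    omega
  -- perfect matching: 3 * M.card = card V
  have hMuniv : M.biUnion id = Finset.univ := by
    ext y
    simp only [Finset.mem_biUnion, id, Finset.mem_univ, iff_true]
    exact hMcov y
  have h3M : 3 * M.card = Fintype.card V := by
    have := Finset.card_biUnion (fun e he f hf hef => hMdisj e he f hf hef)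
      (s := M) (t := id)
    rw [hMuniv, Finset.card_univ] at this
    simp only [id] at this
    rw [Finset.sum_congr rfl (fun f hf => h3 f (hME hf)), Finset.sum_const,
      smul_eq_mul] at this
    omega
  -- selector of the minimal vertex of each matching edge
  have hsel : ∀ f : Finset V, ∃ u : V, f ∈ M →
      u ∈ f ∧ ∀ w ∈ f, dd E r u ≤ dd E r w := by
    intro f
    by_cases hf : f ∈ M
    · obtain ⟨u, hu, humin⟩ := f.exists_min_image (dd E r) (hEne f (hME hf))
      exact ⟨u, fun _ => ⟨hu, humin⟩⟩
    · exact ⟨r, fun h => absurd h hf⟩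
  choose mv hmv using hsel
  set S := M.image mv with hSdef
  have hcov : IsVertexCover E S := by
    intro e heE
    obtain ⟨u, hu, humin⟩ := e.exists_min_image (dd E r) (hEne e heE)
    by_cases heM : e ∈ M
    · refine ⟨mv e, Finset.mem_image_of_mem mv heM, (hmv e heM).1⟩
    · have hecard : (e.erase u).Nonempty := by
        rw [← Finset.card_pos, Finset.card_erase_of_mem hu, h3 e heE]
        omega
      obtain ⟨v, hv⟩ := hecard
      have hvne : v ≠ u := (Finset.mem_erase.mp hv).1
      have hve : v ∈ e := (Finset.mem_erase.mp hv).2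
      have hvlt : dd E r u < dd E r v := by
        rcases Nat.lt_or_ge (dd E r u) (dd E r v) with h | h
        · exact h
        · exact absurd ((noA h3 hc hac r heE hu hve humin
            (le_antisymm (humin v hve) h)).symm) hvne
      obtain ⟨fv, hfvM, hvfv⟩ := hMcov v
      have hfvE : fv ∈ E := hME hfvM
      have hfve : fv ≠ e := fun h => heM (h ▸ hfvM)
      have hfvmin : ∀ w ∈ fv, dd E r v ≤ dd E r w := by
        intro w hw
        by_contra hlt
        push_neg at hlt
        exact hfve (noB h3 hc hac r hfvE heE hvfv hve ⟨w, hw, hlt⟩ ⟨u, hu, hvlt⟩)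
      have h1 := hmv fv hfvM
      have heqd : dd E r (mv fv) = dd E r v := le_antisymm (h1.2 v hvfv) (hfvmin _ h1.1)
      have hmveq : mv fv = v := noA h3 hc hac r hfvE h1.1 hvfv h1.2 heqd
      exact ⟨mv fv, Finset.mem_image_of_mem mv hfvM, hmveq ▸ hve⟩
  have hScard : S.card = M.card := by
    rw [hSdef]
    apply Finset.card_image_of_injOn
    intro f hf f' hf' heq
    by_contra hne
    have hd := hMdisj f hf f' hf' hne
    exact Finset.disjoint_left.mp hd (hmv f hf).1 (heq ▸ (hmv f' hf').1)
  have hmem : M.card ∈ {n | ∃ S : Finset V, IsVertexCover E S ∧ S.card = n} :=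
    ⟨S, hcov, hScard⟩
  have hlow : ∀ n ∈ {n | ∃ S : Finset V, IsVertexCover E S ∧ S.card = n}, M.card ≤ n := by
    rintro n ⟨S', hS', rfl⟩
    have hwit : ∀ f : Finset V, ∃ x : V, f ∈ M → x ∈ S' ∧ x ∈ f := by
      intro f
      by_cases hf : f ∈ M
      · obtain ⟨x, hx, hxf⟩ := hS' f (hME hf)
        exact ⟨x, fun _ => ⟨hx, hxf⟩⟩
      · exact ⟨r, fun h => absurd h hf⟩
    choose g hg using hwit
    apply Finset.card_le_card_of_injOn g (fun f hf => (hg f hf).1)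
    intro f hf f' hf' heq
    by_contra hne
    have hd := hMdisj f hf f' hf' hne
    exact Finset.disjoint_left.mp hd (hg f hf).2 (heq ▸ (hg f' hf').2)
  have hcn : coverNum E = M.card :=
    le_antisymm (Nat.sInf_le hmem) (le_csInf ⟨_, hmem⟩ hlow)
  rw [hcn]
  omega
end

section
/- Let H = (V, E) be a 3-uniform hypertree. Then the vertex cover number equals the matching number: τ(H) = ν(H). -/
variable {V : Type*} [Fintype V] [DecidableEq V] [Nonempty V]

set_option linter.unusedSectionVars false

lemma hasCycle_of (E : Finset (Finset V)) {n : ℕ} (hn : 2 ≤ n) (w : ℕ → V) (g : ℕ → Finset V)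
    (hw : ∀ i < n, ∀ j < n, w i = w j → i = j)
    (hg : ∀ i < n, ∀ j < n, g i = g j → i = j)
    (hgE : ∀ i < n, g i ∈ E)
    (h1 : ∀ i < n, w i ∈ g i)
    (h2 : ∀ i, i + 1 < n → w (i + 1) ∈ g i)
    (h3 : w 0 ∈ g (n - 1)) : HasCycle E := by
  have : NeZero n := ⟨by omega⟩
  have hval : ∀ i : ZMod n, i.val < n := fun i => ZMod.val_lt i
  have hadd : ∀ i : ZMod n, (i + 1).val = (i.val + 1) % n := by
    intro i
    rw [ZMod.val_add, ZMod.val_one_eq_one_mod, Nat.mod_eq_of_lt (by omega : 1 < n)]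
  refine ⟨⟨n, hn, fun i => w i.val, fun i => g i.val, ?_, ?_, fun i => hgE _ (hval i),
    fun i => h1 _ (hval i), ?_⟩⟩
  · intro i j hij
    exact ZMod.val_injective n (hw _ (hval i) _ (hval j) hij)
  · intro i j hij
    exact ZMod.val_injective n (hg _ (hval i) _ (hval j) hij)
  · intro i
    show w ((i+1).val) ∈ g i.val
    rw [hadd i]
    rcases Nat.lt_or_ge (i.val + 1) n with h | h
    · rw [Nat.mod_eq_of_lt h]; exact h2 _ h
    · have : i.val + 1 = n := by have := hval i; omega
      rw [this, Nat.mod_self]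
      have : i.val = n - 1 := by omega
      rw [this]; exact h3

structure Good (E : Finset (Finset V)) (n : ℕ) (v : ℕ → V) (e : ℕ → Finset V) : Prop where
  vinj : ∀ i ≤ n, ∀ j ≤ n, v i = v j → i = j
  einj : ∀ i < n, ∀ j < n, e i = e j → i = j
  emem : ∀ i < n, e i ∈ E
  mem1 : ∀ i < n, v i ∈ e i
  mem2 : ∀ i < n, v (i + 1) ∈ e i

lemma exists_leaf (E : Finset (Finset V)) (hne : E.Nonempty) (h3 : Uniform3 E)
    (hac : ¬ HasCycle E) :
    ∃ e₀ ∈ E, ∃ a ∈ e₀, ∀ f ∈ E, f ≠ e₀ → ∀ x ∈ f, x ∈ e₀ → a ∈ f := by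
  classical
  -- the set of lengths of good paths
  set P : Set ℕ := {n | 1 ≤ n ∧ ∃ v e, Good E n v e} with hP
  have hPne : P.Nonempty := by
    obtain ⟨e₀, he₀⟩ := hne
    have hc : e₀.card = 3 := h3 e₀ he₀
    have : 1 < e₀.card := by omega
    obtain ⟨a, ha, b, hb, hab⟩ := Finset.one_lt_card.mp this
    refine ⟨1, le_refl 1, fun i => if i = 0 then a else b, fun _ => e₀, ?_, ?_, ?_, ?_, ?_⟩
    · intro i hi j hj hij
      interval_cases i <;> interval_cases j <;> simp_all
    · intro i hi j hj _; omega
    · intro i _; exact he₀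
    · intro i hi; interval_cases i; simpa using ha
    · intro i hi; interval_cases i; simpa using hb
  have hPbdd : BddAbove P := by
    refine ⟨E.card, fun n hn => ?_⟩
    obtain ⟨hn1, v, e, hg⟩ := hn
    have : ((Finset.range n).image e).card = n := by
      rw [Finset.card_image_of_injOn, Finset.card_range]
      intro i hi j hj hij
      exact hg.einj i (Finset.mem_range.mp hi) j (Finset.mem_range.mp hj) hij
    calc n = ((Finset.range n).image e).card := this.symm
      _ ≤ E.card := Finset.card_le_card (by
          intro f hf
          obtain ⟨i, hi, rfl⟩ := Finset.mem_image.mp hf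
          exact hg.emem i (Finset.mem_range.mp hi))
  set n := sSup P with hn
  have hnP : n ∈ P := Nat.sSup_mem hPne hPbdd
  obtain ⟨hn1, v, e, hg⟩ := hnP
  have hmax : ∀ m ∈ P, m ≤ n := fun m hm => le_csSup hPbdd hm
  refine ⟨e (n - 1), hg.emem _ (by omega), v (n - 1), hg.mem1 _ (by omega), ?_⟩
  intro f hf hfne x hxf hxe
  by_contra ha
  have hvinj := hg.vinj
  have heinj := hg.einj
  have hmem1 := hg.mem1
  have hmem2 := hg.mem2
  have hemem := hg.emem
  by_cases hx : ∃ i ≤ n, v i = x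
  · obtain ⟨i, hi, rfl⟩ := hx
    have hine : i ≠ n - 1 := fun h => ha (h ▸ hxf)
    by_cases hi2 : i < n - 1
    · -- C1a
      refine hac (hasCycle_of E (n := n - i) (by omega)
        (fun t => v (i + t)) (fun t => e (i + t)) ?_ ?_ ?_ ?_ ?_ ?_)
      · intro t ht s hs hts
        have := hvinj (i + t) (by omega) (i + s) (by omega) hts; omega
      · intro t ht s hs hts
        have := heinj (i + t) (by omega) (i + s) (by omega) hts; omega
      · intro t ht; exact hemem _ (by omega)
      · intro t ht; exact hmem1 _ (by omega)
      · intro t ht; exact hmem2 (i + t) (by omega)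
      · show v (i + 0) ∈ e (i + (n - i - 1))
        have h1 : i + 0 = i := by omega
        have h2 : i + (n - i - 1) = n - 1 := by omega
        rw [h1, h2]; exact hxe
    · have hin : i = n := by omega
      subst hin
      by_cases hfj : ∃ j < n, f = e j
      · -- C1b-i
        obtain ⟨j, hj, rfl⟩ := hfj
        have hjn : j ≠ n - 1 := fun h => hfne (by rw [h])
        refine hac (hasCycle_of E (n := n - j) (by omega)
          (fun t => v (j + 1 + t))
          (fun t => if t = n - j - 1 then e j else e (j + 1 + t)) ?_ ?_ ?_ ?_ ?_ ?_)
        · intro t ht s hs hts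
          beta_reduce at hts
          have := hvinj (j + 1 + t) (by omega) (j + 1 + s) (by omega) hts; omega
        · intro t ht s hs hts
          beta_reduce at hts
          split_ifs at hts with h1 h2 h2
          · omega
          · have := heinj j (by omega) (j + 1 + s) (by omega) hts; omega
          · have := heinj (j + 1 + t) (by omega) j (by omega) hts; omega
          · have := heinj (j + 1 + t) (by omega) (j + 1 + s) (by omega) hts; omega
        · intro t ht; beta_reduce; split_ifs
          · exact hemem _ (by omega)
          · exact hemem _ (by omega)
        · intro t ht
          beta_reduce
          split_ifs with h1
          · have h2 : j + 1 + t = n := by omega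
            rw [h2]; exact hxf
          · exact hmem1 _ (by omega)
        · intro t ht
          beta_reduce
          split_ifs with h1
          · exact absurd h1 (by omega)
          · exact hmem2 (j + 1 + t) (by omega)
        · beta_reduce
          rw [if_pos rfl]
          have h1 : j + 1 + 0 = j + 1 := by omega
          rw [h1]; exact hmem2 j (by omega)
      · push_neg at hfj
        have hcf : f.card = 3 := h3 f hf
        have : (f.erase (v n)).Nonempty := by
          rw [← Finset.card_pos, Finset.card_erase_of_mem hxf, hcf]; omega
        obtain ⟨u, hu⟩ := this
        have huf : u ∈ f := Finset.mem_of_mem_erase hu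
        have hux : u ≠ v n := Finset.ne_of_mem_erase hu
        by_cases hvu : ∃ i' < n, v i' = u
        · -- C1b-ii-α
          obtain ⟨i', hi', rfl⟩ := hvu
          refine hac (hasCycle_of E (n := n - i' + 1) (by omega)
            (fun t => v (i' + t))
            (fun t => if t = n - i' then f else e (i' + t)) ?_ ?_ ?_ ?_ ?_ ?_)
          · intro t ht s hs hts
            beta_reduce at hts
            have := hvinj (i' + t) (by omega) (i' + s) (by omega) hts; omega
          · intro t ht s hs hts
            beta_reduce at hts
            split_ifs at hts with h1 h2 h2
            · omega
            · exact ((hfj (i' + s) (by omega)) hts).elim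
            · exact ((hfj (i' + t) (by omega)) hts.symm).elim
            · have := heinj (i' + t) (by omega) (i' + s) (by omega) hts; omega
          · intro t ht; beta_reduce; split_ifs
            · exact hf
            · exact hemem _ (by omega)
          · intro t ht
            beta_reduce
            split_ifs with h1
            · have h2 : i' + t = n := by omega
              rw [h2]; exact hxf
            · exact hmem1 _ (by omega)
          · intro t ht
            beta_reduce
            split_ifs with h1
            · exact absurd h1 (by omega)
            · exact hmem2 (i' + t) (by omega)
          · beta_reduce
            rw [if_pos (show n - i' + 1 - 1 = n - i' by omega)]
            have h1 : i' + (n - i' + 1 - 1) = i' + (n - i') := by omega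
            have h2 : i' + 0 = i' := by omega
            rw [h2]; exact huf
        · -- C1b-ii-β : extend path
          push_neg at hvu
          have : n + 1 ∈ P := by
            refine ⟨by omega, fun t => if t = n + 1 then u else v t,
              fun t => if t = n then f else e t, ?_, ?_, ?_, ?_, ?_⟩
            · intro t ht s hs hts
              beta_reduce at hts
              by_cases h1 : t = n + 1 <;> by_cases h2 : s = n + 1
              · omega
              · rw [if_pos h1, if_neg h2] at hts
                rcases Nat.lt_or_ge s n with h | h
                · exact absurd hts.symm (hvu s h)
                · have hsn : s = n := by omega
                  rw [hsn] at hts; exact absurd hts hux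
              · rw [if_neg h1, if_pos h2] at hts
                rcases Nat.lt_or_ge t n with h | h
                · exact absurd hts (hvu t h)
                · have htn : t = n := by omega
                  rw [htn] at hts; exact absurd hts.symm hux
              · rw [if_neg h1, if_neg h2] at hts
                have := hvinj t (by omega) s (by omega) hts; omega
            · intro t ht s hs hts
              beta_reduce at hts
              split_ifs at hts with h1 h2 h2
              · omega
              · exact ((hfj s (by omega)) hts).elim
              · exact ((hfj t (by omega)) hts.symm).elim
              · exact heinj t (by omega) s (by omega) hts
            · intro t ht; beta_reduce; split_ifs
              · exact hf
              · exact hemem _ (by omega)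
            · intro t ht
              beta_reduce
              rw [if_neg (show t ≠ n + 1 by omega)]
              by_cases h2 : t = n
              · rw [if_pos h2, h2]; exact hxf
              · rw [if_neg h2]; exact hmem1 _ (by omega)
            · intro t ht
              beta_reduce
              by_cases h1 : t = n
              · rw [if_pos (show t + 1 = n + 1 by omega), if_pos h1]; exact huf
              · rw [if_neg (show t + 1 ≠ n + 1 by omega), if_neg h1]
                exact hmem2 _ (by omega)
          have := hmax _ this; omega
  · -- C2 : x fresh
    push_neg at hx
    by_cases hfj : ∃ j < n, f = e j
    · -- C2-i
      obtain ⟨j, hj, rfl⟩ := hfj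
      have hjn : j ≠ n - 1 := fun h => hfne (by rw [h])
      refine hac (hasCycle_of E (n := n - j) (by omega)
        (fun t => if t = n - j - 1 then x else v (j + 1 + t))
        (fun t => if t = n - j - 1 then e j else e (j + 1 + t)) ?_ ?_ ?_ ?_ ?_ ?_)
      · intro t ht s hs hts
        beta_reduce at hts
        split_ifs at hts with h1 h2 h2
        · omega
        · exact absurd hts.symm (hx (j + 1 + s) (by omega))
        · exact absurd hts (hx (j + 1 + t) (by omega))
        · have := hvinj (j + 1 + t) (by omega) (j + 1 + s) (by omega) hts; omega
      · intro t ht s hs hts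
        beta_reduce at hts
        split_ifs at hts with h1 h2 h2
        · omega
        · have := heinj j (by omega) (j + 1 + s) (by omega) hts; omega
        · have := heinj (j + 1 + t) (by omega) j (by omega) hts; omega
        · have := heinj (j + 1 + t) (by omega) (j + 1 + s) (by omega) hts; omega
      · intro t ht; beta_reduce; split_ifs
        · exact hemem _ (by omega)
        · exact hemem _ (by omega)
      · intro t ht
        beta_reduce
        split_ifs with h1
        · exact hxf
        · exact hmem1 _ (by omega)
      · intro t ht
        beta_reduce
        by_cases h1 : t + 1 = n - j - 1
        · rw [if_pos h1, if_neg (show t ≠ n - j - 1 by omega)]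
          have h3' : j + 1 + t = n - 1 := by omega
          rw [h3']; exact hxe
        · rw [if_neg h1, if_neg (show t ≠ n - j - 1 by omega)]
          exact hmem2 (j + 1 + t) (by omega)
      · beta_reduce
        rw [if_neg (show (0:ℕ) ≠ n - j - 1 by omega), if_pos rfl]
        have h1 : j + 1 + 0 = j + 1 := by omega
        rw [h1]; exact hmem2 j (by omega)
    · push_neg at hfj
      have hcf : f.card = 3 := h3 f hf
      have : (f.erase x).Nonempty := by
        rw [← Finset.card_pos, Finset.card_erase_of_mem hxf, hcf]; omega
      obtain ⟨u, hu⟩ := this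
      have huf : u ∈ f := Finset.mem_of_mem_erase hu
      have hux : u ≠ x := Finset.ne_of_mem_erase hu
      have hun : u ≠ v n := by
        rintro rfl
        refine hac (hasCycle_of E (n := 2) le_rfl
          (fun t => if t = 0 then x else v n)
          (fun t => if t = 0 then f else e (n - 1)) ?_ ?_ ?_ ?_ ?_ ?_)
        · intro t ht s hs hts
          beta_reduce at hts
          split_ifs at hts with h1 h2 h2
          · omega
          · exact absurd hts.symm (hx n (by omega))
          · exact absurd hts (hx n (by omega))
          · omega
        · intro t ht s hs hts
          beta_reduce at hts
          split_ifs at hts with h1 h2 h2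
          · omega
          · exact (hfne hts).elim
          · exact (hfne hts.symm).elim
          · omega
        · intro t ht; beta_reduce; split_ifs
          · exact hf
          · exact hemem _ (by omega)
        · intro t ht
          beta_reduce
          split_ifs with h1
          · exact hxf
          · have h2 : n = n - 1 + 1 := by omega
            rw [h2]; exact hmem2 (n - 1) (by omega)
        · intro t ht
          have h0 : t = 0 := by omega
          subst h0
          beta_reduce
          rw [if_neg (by omega : (0:ℕ) + 1 ≠ 0), if_pos rfl]; exact huf
        · beta_reduce
          rw [if_pos rfl, if_neg (by omega : 2 - 1 ≠ 0)]; exact hxe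
      by_cases hvu : ∃ i' < n, v i' = u
      · -- C2-ii-α
        obtain ⟨i', hi', rfl⟩ := hvu
        refine hac (hasCycle_of E (n := n - i' + 1) (by omega)
          (fun t => if t = n - i' then x else v (i' + t))
          (fun t => if t = n - i' then f else e (i' + t)) ?_ ?_ ?_ ?_ ?_ ?_)
        · intro t ht s hs hts
          beta_reduce at hts
          split_ifs at hts with h1 h2 h2
          · omega
          · exact absurd hts.symm (hx (i' + s) (by omega))
          · exact absurd hts (hx (i' + t) (by omega))
          · have := hvinj (i' + t) (by omega) (i' + s) (by omega) hts; omega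
        · intro t ht s hs hts
          beta_reduce at hts
          split_ifs at hts with h1 h2 h2
          · omega
          · exact ((hfj (i' + s) (by omega)) hts).elim
          · exact ((hfj (i' + t) (by omega)) hts.symm).elim
          · have := heinj (i' + t) (by omega) (i' + s) (by omega) hts; omega
        · intro t ht; beta_reduce; split_ifs
          · exact hf
          · exact hemem _ (by omega)
        · intro t ht
          beta_reduce
          split_ifs with h1
          · exact hxf
          · exact hmem1 _ (by omega)
        · intro t ht
          beta_reduce
          by_cases h1 : t + 1 = n - i'
          · rw [if_pos h1, if_neg (show t ≠ n - i' by omega)]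
            have h3' : i' + t = n - 1 := by omega
            rw [h3']; exact hxe
          · rw [if_neg h1, if_neg (show t ≠ n - i' by omega)]
            exact hmem2 (i' + t) (by omega)
        · beta_reduce
          rw [if_neg (show (0:ℕ) ≠ n - i' by omega),
            if_pos (show n - i' + 1 - 1 = n - i' by omega)]
          have h1 : i' + 0 = i' := by omega
          rw [h1]; exact huf
      · -- C2-ii-β : extend path replacing v n by x then u
        push_neg at hvu
        have hunn : u ≠ x := hux
        have : n + 1 ∈ P := by
          refine ⟨by omega, fun t => if t = n + 1 then u else if t = n then x else v t,
            fun t => if t = n then f else e t, ?_, ?_, ?_, ?_, ?_⟩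
          · intro t ht s hs hts
            beta_reduce at hts
            by_cases h1 : t = n + 1 <;> by_cases h2 : s = n + 1
            · omega
            · rw [if_pos h1, if_neg h2] at hts
              by_cases h3 : s = n
              · rw [if_pos h3] at hts; exact absurd hts hux
              · rw [if_neg h3] at hts; exact absurd hts.symm (hvu s (by omega))
            · rw [if_neg h1, if_pos h2] at hts
              by_cases h3 : t = n
              · rw [if_pos h3] at hts; exact absurd hts.symm hux
              · rw [if_neg h3] at hts; exact absurd hts (hvu t (by omega))
            · rw [if_neg h1, if_neg h2] at hts
              by_cases h3 : t = n <;> by_cases h4 : s = n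
              · omega
              · rw [if_pos h3, if_neg h4] at hts
                exact absurd hts.symm (hx s (by omega))
              · rw [if_neg h3, if_pos h4] at hts
                exact absurd hts (hx t (by omega))
              · rw [if_neg h3, if_neg h4] at hts
                have := hvinj t (by omega) s (by omega) hts; omega
          · intro t ht s hs hts
            beta_reduce at hts
            split_ifs at hts with h1 h2 h2
            · omega
            · exact ((hfj s (by omega)) hts).elim
            · exact ((hfj t (by omega)) hts.symm).elim
            · exact heinj t (by omega) s (by omega) hts
          · intro t ht; beta_reduce; split_ifs
            · exact hf
            · exact hemem _ (by omega)
          · intro t ht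
            beta_reduce
            rw [if_neg (show t ≠ n + 1 by omega)]
            by_cases h2 : t = n
            · rw [if_pos h2, if_pos h2]; exact hxf
            · rw [if_neg h2, if_neg h2]; exact hmem1 _ (by omega)
          · intro t ht
            beta_reduce
            by_cases h1 : t = n
            · rw [if_pos (show t + 1 = n + 1 by omega), if_pos h1]; exact huf
            · rw [if_neg (show t + 1 ≠ n + 1 by omega), if_neg h1]
              by_cases h2 : t + 1 = n
              · rw [if_pos h2, show t = n - 1 by omega]; exact hxe
              · rw [if_neg h2]; exact hmem2 _ (by omega)
        have := hmax _ this; omega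

lemma hasCycle_mono {E E' : Finset (Finset V)} (h : E' ⊆ E) (hc : HasCycle E') :
    HasCycle E := by
  obtain ⟨C⟩ := hc
  exact ⟨⟨C.k, C.two_le, C.v, C.e, C.v_inj, C.e_inj, fun i => h (C.e_mem i),
    C.mem_left, C.mem_right⟩⟩

lemma exists_pair (E : Finset (Finset V)) (h3 : Uniform3 E) (hac : ¬ HasCycle E) :
    ∃ (S : Finset V) (M : Finset (Finset V)),
      IsVertexCover E S ∧ IsMatching E M ∧ S.card ≤ M.card := by
  classical
  induction E using Finset.strongInduction with
  | _ E ih =>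
    rcases Finset.eq_empty_or_nonempty E with rfl | hne
    · exact ⟨∅, ∅, fun e he => absurd he (Finset.notMem_empty e),
        ⟨Finset.Subset.refl _, fun e he => absurd he (Finset.notMem_empty e)⟩, le_refl _⟩
    · obtain ⟨e₀, he₀, a, hae₀, hleaf⟩ := exists_leaf E hne h3 hac
      set E' : Finset (Finset V) := E.filter (fun f => a ∉ f) with hE'
      have hsub : E' ⊆ E := Finset.filter_subset _ _
      have hssub : E' ⊂ E := by
        refine Finset.ssubset_iff_of_subset hsub |>.mpr ⟨e₀, he₀, ?_⟩
        simp [hE', hae₀]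
      obtain ⟨S', M', hS', hM', hcard⟩ := ih E' hssub
        (fun e he => h3 e (hsub he)) (fun hc => hac (hasCycle_mono hsub hc))
      have he₀M' : e₀ ∉ M' := by
        intro h
        have := hM'.1 h
        rw [hE', Finset.mem_filter] at this
        exact this.2 hae₀
      refine ⟨insert a S', insert e₀ M', ?_, ⟨?_, ?_⟩, ?_⟩
      · intro e he
        by_cases hae : a ∈ e
        · exact ⟨a, Finset.mem_insert_self _ _, hae⟩
        · have : e ∈ E' := by rw [hE', Finset.mem_filter]; exact ⟨he, hae⟩
          obtain ⟨x, hxS, hxe⟩ := hS' e this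
          exact ⟨x, Finset.mem_insert_of_mem hxS, hxe⟩
      · intro e he
        rcases Finset.mem_insert.mp he with rfl | h
        · exact he₀
        · exact hsub (hM'.1 h)
      · intro e he f hf hef
        have key : ∀ g ∈ M', Disjoint e₀ g := by
          intro g hg
          have hgE' : g ∈ E' := hM'.1 hg
          have hga : a ∉ g := by
            have h' := hgE'
            rw [hE', Finset.mem_filter] at h'
            exact h'.2
          have hge₀ : g ≠ e₀ := fun h => hga (h ▸ hae₀)
          rw [Finset.disjoint_left]
          intro x hxe₀ hxg
          exact hga (hleaf g (hsub hgE') hge₀ x hxg hxe₀)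
        rcases Finset.mem_insert.mp he with rfl | he'
        · rcases Finset.mem_insert.mp hf with rfl | hf'
          · exact absurd rfl hef
          · exact key f hf'
        · rcases Finset.mem_insert.mp hf with rfl | hf'
          · exact (key e he').symm
          · exact hM'.2 e he' f hf' hef
      · calc (insert a S').card ≤ S'.card + 1 := Finset.card_insert_le _ _
          _ ≤ M'.card + 1 := by omega
          _ = (insert e₀ M').card := (Finset.card_insert_of_notMem he₀M').symm

lemma matching_le_cover (E : Finset (Finset V)) {S : Finset V} {M : Finset (Finset V)}
    (hS : IsVertexCover E S) (hM : IsMatching E M) : M.card ≤ S.card := by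
  classical
  have hpick : ∀ e ∈ M, ∃ x ∈ S, x ∈ e := fun e he => hS e (hM.1 he)
  choose φ hφS hφe using hpick
  -- use attach-free injective function via Finset.card_le_card_of_injOn
  set ψ : Finset V → V := fun e => if h : e ∈ M then φ e h else Classical.arbitrary V
  have h1 : ∀ e ∈ M, ψ e ∈ S := by
    intro e he; simp only [ψ, dif_pos he]; exact hφS e he
  have h2 : Set.InjOn ψ M := by
    intro e he f hf hef
    simp only [Finset.mem_coe] at he hf
    simp only [ψ, dif_pos he, dif_pos hf] at hef
    by_contra hne
    have hd := hM.2 e he f hf hne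
    exact Finset.disjoint_left.mp hd (hφe e he) (hef ▸ hφe f hf)
  exact Finset.card_le_card_of_injOn ψ h1 h2

/-- For a 3-uniform hypertree, τ(H) = ν(H). -/
theorem stmt6 (E : Finset (Finset V)) (h3 : Uniform3 E) (htree : IsHypertree E) :
    coverNum E = matchNum E := by
  classical
  have hac := htree.2
  have hTne : {n | ∃ S : Finset V, IsVertexCover E S ∧ S.card = n}.Nonempty := by
    refine ⟨(Finset.univ : Finset V).card, ?_⟩
    refine ⟨(Finset.univ : Finset V), fun e he => ?_, rfl⟩
    have : e.card = 3 := h3 e he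
    have : e.Nonempty := Finset.card_pos.mp (by omega)
    obtain ⟨x, hx⟩ := this
    exact ⟨x, Finset.mem_univ x, hx⟩
  have hMbdd : BddAbove {n | ∃ M : Finset (Finset V), IsMatching E M ∧ M.card = n} := by
    refine ⟨E.card, fun n hn => ?_⟩
    obtain ⟨M, hM, rfl⟩ := hn
    exact Finset.card_le_card hM.1
  obtain ⟨S, M, hS, hM, hcard⟩ := exists_pair E h3 hac
  apply le_antisymm
  · calc coverNum E ≤ S.card := Nat.sInf_le ⟨S, hS, rfl⟩
      _ ≤ M.card := hcard
      _ ≤ matchNum E := le_csSup hMbdd ⟨M, hM, rfl⟩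
  · obtain ⟨S₀, hS₀, hS₀card⟩ := Nat.sInf_mem hTne
    have : matchNum E ≤ S₀.card := by
      have hM0 : (0:ℕ) ∈ {n | ∃ M : Finset (Finset V), IsMatching E M ∧ M.card = n} :=
        ⟨∅, ⟨Finset.empty_subset _, fun e he => absurd he (Finset.notMem_empty e)⟩,
          Finset.card_empty⟩
      apply csSup_le ⟨0, hM0⟩
      rintro n ⟨M', hM', rfl⟩
      exact matching_le_cover E hS₀ hM'
    rw [hS₀card] at this
    exact this
end

section
/- Let C = v₁e₁v₂e₂…vₖeₖv₁ be a cycle in a hypergraph H that is not a minimal cycle. Then there exist two distinct cycles C₁ and C₂ in H, each of whose edges belongs to {e₁,…,eₖ} or is obtained from restricting to that edge set, such that the length of C₁ is strictly less than k, the length of C₂ is strictly less than k, the sum of the lengths of C₁ and C₂ is at most k + 2, and C₁ and C₂ share a common vertex. -/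
variable {V : Type*} [Fintype V] [DecidableEq V] [Nonempty V]

section Aux

private lemma natCast_eq_iff' {k r s : ℕ} [NeZero k] (hr : r < k) (hs : s < k) :
    (r : ZMod k) = (s : ZMod k) ↔ r = s := by
  constructor
  · intro h
    have h2 := congrArg ZMod.val h
    rwa [ZMod.val_cast_of_lt hr, ZMod.val_cast_of_lt hs] at h2
  · rintro rfl; rfl

private lemma natCast_ne_zero' {k r : ℕ} [NeZero k] (hr1 : 1 ≤ r) (hrk : r < k) :
    (r : ZMod k) ≠ 0 := by
  intro h
  have h2 := congrArg ZMod.val h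
  rw [ZMod.val_cast_of_lt hrk, ZMod.val_zero] at h2
  omega

private lemma exists_subCycle (E : Finset (Finset V)) (C : HCycle E) (a : ZMod C.k) (l : ℕ)
    (hl2 : 2 ≤ l) (hlk : l ≤ C.k) (x : V)
    (hx1 : x ∈ C.e a) (hx2 : x ∈ C.e (a + ((l - 1 : ℕ) : ZMod C.k)))
    (hx3 : ∀ r : ℕ, 1 ≤ r → r < l → x ≠ C.v (a + (r : ZMod C.k))) :
    ∃ D : HCycle E, D.k = l ∧ (∃ r, x ∈ D.e r) ∧
      (∀ u : ZMod C.k, C.e u ∈ Set.range D.e ↔ (u - a).val < l) ∧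
      Set.range D.e ⊆ Set.range C.e := by
  have hk2 := C.two_le
  haveI : NeZero C.k := ⟨by omega⟩
  haveI : NeZero l := ⟨by omega⟩
  refine ⟨⟨l, hl2,
      fun r => if r = 0 then x else C.v (a + ((r.val : ℕ) : ZMod C.k)),
      fun r => C.e (a + ((r.val : ℕ) : ZMod C.k)), ?_, ?_, ?_, ?_, ?_⟩,
    rfl, ?_, ?_, ?_⟩
  · -- v_inj
    intro r s hrs
    by_cases hr : r = 0 <;> by_cases hs : s = 0
    · rw [hr, hs]
    · exfalso
      simp only [if_pos hr, if_neg hs] at hrs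
      exact hx3 s.val (by
        have := (ZMod.val_eq_zero s).not.mpr hs; omega) (ZMod.val_lt s) hrs
    · exfalso
      simp only [if_neg hr, if_pos hs] at hrs
      exact hx3 r.val (by
        have := (ZMod.val_eq_zero r).not.mpr hr; omega) (ZMod.val_lt r) hrs.symm
    · simp only [if_neg hr, if_neg hs] at hrs
      have h1 := C.v_inj hrs
      have h2 : ((r.val : ℕ) : ZMod C.k) = ((s.val : ℕ) : ZMod C.k) := by
        exact add_left_cancel h1
      have h3 : r.val = s.val :=
        (natCast_eq_iff' (lt_of_lt_of_le (ZMod.val_lt r) hlk)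
          (lt_of_lt_of_le (ZMod.val_lt s) hlk)).mp h2
      exact ZMod.val_injective l h3
  · -- e_inj
    intro r s hrs
    have h1 := C.e_inj hrs
    have h2 : ((r.val : ℕ) : ZMod C.k) = ((s.val : ℕ) : ZMod C.k) := add_left_cancel h1
    have h3 : r.val = s.val :=
      (natCast_eq_iff' (lt_of_lt_of_le (ZMod.val_lt r) hlk)
        (lt_of_lt_of_le (ZMod.val_lt s) hlk)).mp h2
    exact ZMod.val_injective l h3
  · exact fun r => C.e_mem _
  · -- mem_left
    intro r
    by_cases hr : r = 0
    · simp only [if_pos hr, hr, ZMod.val_zero, Nat.cast_zero, add_zero]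
      exact hx1
    · simp only [if_neg hr]
      exact C.mem_left _
  · -- mem_right
    intro r
    by_cases h1 : r.val = l - 1
    · have hr1 : r + 1 = 0 := by
        have hrr : r = ((l - 1 : ℕ) : ZMod l) := by
          rw [← h1, ZMod.natCast_zmod_val]
        rw [hrr]
        have h2 : ((l - 1 : ℕ) : ZMod l) + 1 = ((l - 1 + 1 : ℕ) : ZMod l) := by
          push_cast; ring
        have h3 : l - 1 + 1 = l := by omega
        rw [h2, h3, ZMod.natCast_self]
      rw [hr1]
      simp only [if_pos rfl, h1]
      exact hx2
    · have hlt : r.val + 1 < l := by have := ZMod.val_lt r; omega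
      have hval : (r + 1).val = r.val + 1 := by
        have hrr : r + 1 = ((r.val + 1 : ℕ) : ZMod l) := by
          rw [Nat.cast_add, ZMod.natCast_zmod_val, Nat.cast_one]
        rw [hrr, ZMod.val_cast_of_lt hlt]
      have hne : r + 1 ≠ 0 := by
        intro h0; rw [h0, ZMod.val_zero] at hval; omega
      simp only [if_neg hne]
      rw [hval]
      have hcast : (((r.val + 1 : ℕ)) : ZMod C.k) = ((r.val : ℕ) : ZMod C.k) + 1 := by
        push_cast; ring
      rw [hcast, ← add_assoc]
      exact C.mem_right _
  · -- shared vertex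
    refine ⟨0, ?_⟩
    simpa only [ZMod.val_zero, Nat.cast_zero, add_zero] using hx1
  · -- range characterization
    intro u
    constructor
    · rintro ⟨r, hr⟩
      have h1 := C.e_inj hr
      have hu : u - a = ((r.val : ℕ) : ZMod C.k) := by rw [← h1]; ring
      rw [hu, ZMod.val_cast_of_lt (lt_of_lt_of_le (ZMod.val_lt r) hlk)]
      exact ZMod.val_lt r
    · intro h
      refine ⟨(((u - a).val : ℕ) : ZMod l), ?_⟩
      show C.e (a + ((((u - a).val : ℕ) : ZMod l).val : ℕ)) = C.e u
      rw [ZMod.val_cast_of_lt h, ZMod.natCast_zmod_val]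
      congr 1
      ring
  · rintro _ ⟨r, rfl⟩
    exact ⟨_, rfl⟩

private lemma two_cycles (E : Finset (Finset V)) (C : HCycle E) (x : V)
    (a₁ a₂ u : ZMod C.k) (l₁ l₂ : ℕ)
    (hl₁ : 2 ≤ l₁) (hl₁k : l₁ < C.k) (hl₂ : 2 ≤ l₂) (hl₂k : l₂ < C.k)
    (hsum : l₁ + l₂ ≤ C.k + 2)
    (h11 : x ∈ C.e a₁) (h12 : x ∈ C.e (a₁ + ((l₁ - 1 : ℕ) : ZMod C.k)))
    (h13 : ∀ r : ℕ, 1 ≤ r → r < l₁ → x ≠ C.v (a₁ + (r : ZMod C.k)))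
    (h21 : x ∈ C.e a₂) (h22 : x ∈ C.e (a₂ + ((l₂ - 1 : ℕ) : ZMod C.k)))
    (h23 : ∀ r : ℕ, 1 ≤ r → r < l₂ → x ≠ C.v (a₂ + (r : ZMod C.k)))
    (hu1 : (u - a₁).val < l₁) (hu2 : ¬ (u - a₂).val < l₂) :
    ∃ C₁ C₂ : HCycle E,
      Set.range C₁.e ⊆ Set.range C.e ∧ Set.range C₂.e ⊆ Set.range C.e ∧
      C₁.k < C.k ∧ C₂.k < C.k ∧ C₁.k + C₂.k ≤ C.k + 2 ∧
      Set.range C₁.e ≠ Set.range C₂.e ∧ ShareVertex C₁ C₂ := by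
  obtain ⟨D₁, hD₁k, ⟨r₁, hr₁⟩, hiff₁, hsub₁⟩ :=
    exists_subCycle E C a₁ l₁ hl₁ hl₁k.le x h11 h12 h13
  obtain ⟨D₂, hD₂k, ⟨r₂, hr₂⟩, hiff₂, hsub₂⟩ :=
    exists_subCycle E C a₂ l₂ hl₂ hl₂k.le x h21 h22 h23
  refine ⟨D₁, D₂, hsub₁, hsub₂, by omega, by omega, by omega, ?_,
    ⟨x, ⟨r₁, hr₁⟩, ⟨r₂, hr₂⟩⟩⟩
  intro hEq
  have h1 : C.e u ∈ Set.range D₁.e := (hiff₁ u).mpr hu1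
  rw [hEq] at h1
  exact hu2 ((hiff₂ u).mp h1)

private lemma cast_sub_k {k : ℕ} [NeZero k] {s : ℕ} (hs : s ≤ k) :
    ((k - s : ℕ) : ZMod k) = -(s : ZMod k) := by
  have h1 : ((k - s : ℕ) : ZMod k) + (s : ZMod k) = ((k : ℕ) : ZMod k) := by
    rw [← Nat.cast_add]; congr 1; omega
  rw [ZMod.natCast_self] at h1
  exact eq_neg_of_add_eq_zero_left h1

private lemma key (E : Finset (Finset V)) (C : HCycle E) (i j : ZMod C.k)
    (hji : j ≠ i) (hji1 : j ≠ i + 1) (hij1 : i ≠ j + 1)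
    (x : V) (hxi : x ∈ C.e i) (hxj : x ∈ C.e j)
    (h : (∀ m, x ≠ C.v m) ∨
      ∃ s : ℕ, 1 ≤ s ∧ s ≤ (j - i).val ∧ x = C.v (i + (s : ZMod C.k))) :
    ∃ C₁ C₂ : HCycle E,
      Set.range C₁.e ⊆ Set.range C.e ∧ Set.range C₂.e ⊆ Set.range C.e ∧
      C₁.k < C.k ∧ C₂.k < C.k ∧ C₁.k + C₂.k ≤ C.k + 2 ∧
      Set.range C₁.e ≠ Set.range C₂.e ∧ ShareVertex C₁ C₂ := by
  have hk2 := C.two_le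
  haveI : NeZero C.k := ⟨by omega⟩
  set t := (j - i).val with htdef
  have htk : t < C.k := ZMod.val_lt _
  have htv : ((t : ℕ) : ZMod C.k) = j - i := ZMod.natCast_zmod_val _
  have ht0 : t ≠ 0 := by
    intro h0
    apply hji
    have h1 : j - i = 0 := by rw [← htv, h0, Nat.cast_zero]
    rwa [sub_eq_zero] at h1
  have ht1 : t ≠ 1 := by
    intro h0
    apply hji1
    have h1 : j - i = 1 := by rw [← htv, h0, Nat.cast_one]
    linear_combination h1
  have htk1 : t ≠ C.k - 1 := by
    intro h0
    apply hij1
    have h1 : j - i = ((C.k - 1 : ℕ) : ZMod C.k) := by rw [← htv, h0]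
    rw [cast_sub_k (by omega), Nat.cast_one] at h1
    linear_combination -h1
  have ht2 : 2 ≤ t := by omega
  have htk2 : t ≤ C.k - 2 := by omega
  have hval_i1_i : ((i + 1) - i).val = 1 := by
    have h1 : (i + 1) - i = ((1 : ℕ) : ZMod C.k) := by push_cast; ring
    rw [h1, ZMod.val_cast_of_lt (by omega)]
  have hj1 : ((C.k + 1 - t : ℕ) : ZMod C.k) = (i + 1) - j := by
    have h1 : ((C.k + 1 - t : ℕ) : ZMod C.k) + ((t : ℕ) : ZMod C.k) = ((C.k + 1 : ℕ) : ZMod C.k) := by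
      rw [← Nat.cast_add]; congr 1; omega
    have h2 : ((C.k + 1 : ℕ) : ZMod C.k) = 1 := by
      rw [Nat.cast_add, ZMod.natCast_self, Nat.cast_one, zero_add]
    rw [h2, htv] at h1
    linear_combination h1
  have hval_i1_j : ((i + 1) - j).val = C.k + 1 - t := by
    rw [← hj1, ZMod.val_cast_of_lt (by omega)]
  have hji' : j + ((C.k - t + 1 - 1 : ℕ) : ZMod C.k) = i := by
    have e1 : C.k - t + 1 - 1 = C.k - t := by omega
    rw [e1, cast_sub_k htk.le, htv]; ring
  rcases h with hnov | ⟨s, hs1, hst, hxv⟩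
  · -- x is not a vertex of the cycle
    refine two_cycles E C x i j (i + 1) (t + 1) (C.k - t + 1) (by omega) (by omega)
      (by omega) (by omega) (by omega) hxi ?_ (fun r _ _ => hnov _)
      hxj ?_ (fun r _ _ => hnov _) ?_ ?_
    · have h1 : i + ((t + 1 - 1 : ℕ) : ZMod C.k) = j := by
        have e1 : t + 1 - 1 = t := by omega
        rw [e1, htv]; ring
      rw [h1]; exact hxj
    · rw [hji']; exact hxi
    · rw [hval_i1_i]; omega
    · rw [hval_i1_j]; omega
  · by_cases hs1' : s = 1
    · -- x = v (i+1)
      subst hs1'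
      rw [Nat.cast_one] at hxv
      refine two_cycles E C x (i + 1) j (i + 1) t (C.k - t + 1) (by omega) (by omega)
        (by omega) (by omega) (by omega) (by rw [hxv]; exact C.mem_left _) ?_ ?_
        hxj ?_ ?_ ?_ ?_
      · have e1 : ((t - 1 : ℕ) : ZMod C.k) + 1 = ((t : ℕ) : ZMod C.k) := by
          have e0 : t - 1 + 1 = t := by omega
          conv_rhs => rw [← e0]
          rw [Nat.cast_add, Nat.cast_one]
        have h1 : i + 1 + ((t - 1 : ℕ) : ZMod C.k) = j := by
          linear_combination e1 + htv
        rw [h1]; exact hxj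
      · intro r hr1 hrt heq
        have h1 : i + 1 = i + 1 + (r : ZMod C.k) := C.v_inj (hxv.symm.trans heq)
        have h2 : (r : ZMod C.k) = ((0 : ℕ) : ZMod C.k) := by push_cast; linear_combination -h1
        have := (natCast_eq_iff' (by omega) (by omega)).mp h2
        omega
      · rw [hji', hxv]; exact C.mem_right _
      · intro r hr1 hrt heq
        have h1 : i + 1 = j + (r : ZMod C.k) := C.v_inj (hxv.symm.trans heq)
        have h2 : (r : ZMod C.k) = ((C.k + 1 - t : ℕ) : ZMod C.k) := by
          rw [hj1]; linear_combination -h1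
        have := (natCast_eq_iff' (by omega) (by omega)).mp h2
        omega
      · simp only [sub_self, ZMod.val_zero]; omega
      · rw [hval_i1_j]; omega
    · by_cases hst' : s = t
      · -- x = v j
        subst hst'
        have hxvj : x = C.v j := by rw [hxv]; congr 1; linear_combination htv
        refine two_cycles E C x i j (i + 1) t (C.k - t + 1) (by omega) (by omega)
          (by omega) (by omega) (by omega) hxi ?_ ?_
          hxj ?_ ?_ ?_ ?_
        · have e1 : ((t - 1 : ℕ) : ZMod C.k) + 1 = ((t : ℕ) : ZMod C.k) := by
            have e0 : t - 1 + 1 = t := by omega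
            conv_rhs => rw [← e0]
            rw [Nat.cast_add, Nat.cast_one]
          have h1 : j = (i + ((t - 1 : ℕ) : ZMod C.k)) + 1 := by
            linear_combination -htv - e1
          rw [hxvj, h1]; exact C.mem_right _
        · intro r hr1 hrt heq
          have h1 : j = i + (r : ZMod C.k) := C.v_inj (hxvj.symm.trans heq)
          have h2 : (r : ZMod C.k) = ((t : ℕ) : ZMod C.k) := by
            rw [htv]; linear_combination -h1
          have := (natCast_eq_iff' (by omega) (by omega)).mp h2
          omega
        · rw [hji']; exact hxi
        · intro r hr1 hrt heq
          have h1 : j = j + (r : ZMod C.k) := C.v_inj (hxvj.symm.trans heq)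
          have h2 : (r : ZMod C.k) = ((0 : ℕ) : ZMod C.k) := by push_cast; linear_combination -h1
          have := (natCast_eq_iff' (by omega) (by omega)).mp h2
          omega
        · rw [hval_i1_i]; omega
        · rw [hval_i1_j]; omega
      · -- 2 ≤ s ≤ t - 1 : interior
        have hs2 : 2 ≤ s := by omega
        have hstm : s ≤ t - 1 := by omega
        refine two_cycles E C x i (i + ((s : ℕ) : ZMod C.k)) i s (t - s + 1) (by omega)
          (by omega) (by omega) (by omega) (by omega) hxi ?_ ?_
          (by rw [hxv]; exact C.mem_left _) ?_ ?_ ?_ ?_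
        · have e1 : ((s - 1 : ℕ) : ZMod C.k) + 1 = ((s : ℕ) : ZMod C.k) := by
            have e0 : s - 1 + 1 = s := by omega
            conv_rhs => rw [← e0]
            rw [Nat.cast_add, Nat.cast_one]
          have h1 : i + ((s : ℕ) : ZMod C.k) = (i + ((s - 1 : ℕ) : ZMod C.k)) + 1 := by
            linear_combination -e1
          rw [hxv, h1]; exact C.mem_right _
        · intro r hr1 hrs heq
          have h1 : i + ((s : ℕ) : ZMod C.k) = i + (r : ZMod C.k) := C.v_inj (hxv.symm.trans heq)
          have h2 : (r : ZMod C.k) = ((s : ℕ) : ZMod C.k) := by linear_combination -h1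
          have := (natCast_eq_iff' (by omega) (by omega)).mp h2
          omega
        · have e1 : ((s : ℕ) : ZMod C.k) + ((t - s + 1 - 1 : ℕ) : ZMod C.k) = ((t : ℕ) : ZMod C.k) := by
            rw [← Nat.cast_add]; congr 1; omega
          have h1 : i + ((s : ℕ) : ZMod C.k) + ((t - s + 1 - 1 : ℕ) : ZMod C.k) = j := by
            linear_combination e1 + htv
          rw [h1]; exact hxj
        · intro r hr1 hrt heq
          have h1 : i + ((s : ℕ) : ZMod C.k) = i + ((s : ℕ) : ZMod C.k) + (r : ZMod C.k) :=
            C.v_inj (hxv.symm.trans heq)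
          have h2 : (r : ZMod C.k) = ((0 : ℕ) : ZMod C.k) := by push_cast; linear_combination -h1
          have := (natCast_eq_iff' (by omega) (by omega)).mp h2
          omega
        · simp only [sub_self, ZMod.val_zero]; omega
        · have h1 : i - (i + ((s : ℕ) : ZMod C.k)) = ((C.k - s : ℕ) : ZMod C.k) := by
            rw [cast_sub_k (by omega)]; ring
          rw [h1, ZMod.val_cast_of_lt (by omega)]; omega

end Aux

/-- If a cycle C of length k is not minimal, then there are
two distinct cycles C₁, C₂ whose edges all come from the edges of C, of lengths
< k each, with total length ≤ k + 2, sharing a common vertex. -/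
theorem stmt7 (E : Finset (Finset V)) (C : HCycle E) (hC : ¬ IsMinimalCycle C) :
    ∃ C₁ C₂ : HCycle E,
      Set.range C₁.e ⊆ Set.range C.e ∧ Set.range C₂.e ⊆ Set.range C.e ∧
      C₁.k < C.k ∧ C₂.k < C.k ∧ C₁.k + C₂.k ≤ C.k + 2 ∧
      Set.range C₁.e ≠ Set.range C₂.e ∧ ShareVertex C₁ C₂ := by
  have hk2 := C.two_le
  haveI : NeZero C.k := ⟨by omega⟩
  unfold IsMinimalCycle at hC
  push_neg at hC
  obtain ⟨i, j, hji, hji1, hij1, hdis⟩ := hC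
  rw [Finset.not_disjoint_iff] at hdis
  obtain ⟨x, hxi, hxj⟩ := hdis
  by_cases hxv : ∀ m, x ≠ C.v m
  · exact key E C i j hji hji1 hij1 x hxi hxj (Or.inl hxv)
  · push_neg at hxv
    obtain ⟨m, hm⟩ := hxv
    have hsv : (((m - i).val : ℕ) : ZMod C.k) = m - i := ZMod.natCast_zmod_val _
    have hsk : (m - i).val < C.k := ZMod.val_lt _
    by_cases hcase : 1 ≤ (m - i).val ∧ (m - i).val ≤ (j - i).val
    · refine key E C i j hji hji1 hij1 x hxi hxj (Or.inr ⟨(m - i).val, hcase.1, hcase.2, ?_⟩)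
      rw [hm]
      congr 1
      rw [hsv]
      ring
    · -- use the other arc, swapping the roles of i and j
      have htv : (((j - i).val : ℕ) : ZMod C.k) = j - i := ZMod.natCast_zmod_val _
      have htk : (j - i).val < C.k := ZMod.val_lt _
      have ht0 : (j - i).val ≠ 0 := by
        intro h0
        apply hji
        have h1 : j - i = 0 := by rw [← htv, h0, Nat.cast_zero]
        rwa [sub_eq_zero] at h1
      have ht' : (i - j).val = C.k - (j - i).val := by
        have h1 : i - j = ((C.k - (j - i).val : ℕ) : ZMod C.k) := by
          rw [cast_sub_k htk.le, htv]; ring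
        rw [h1, ZMod.val_cast_of_lt (by omega)]
      have hs0 : (m - i).val = 0 ∨ (j - i).val < (m - i).val := by
        rcases Nat.lt_or_ge (j - i).val (m - i).val with h | h
        · exact Or.inr h
        · left; by_contra h0; exact hcase ⟨by omega, h⟩
      have hgoal : ∃ s' : ℕ, 1 ≤ s' ∧ s' ≤ (i - j).val ∧ m - j = ((s' : ℕ) : ZMod C.k) := by
        rcases hs0 with h0 | hlt
        · have hmi : m = i := by
            have h1 : m - i = 0 := (ZMod.val_eq_zero _).mp h0
            linear_combination h1
          refine ⟨(i - j).val, ?_, le_refl _, ?_⟩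
          · rw [ht']; omega
          · rw [ZMod.natCast_zmod_val, hmi]
        · refine ⟨(m - i).val - (j - i).val, by omega, ?_, ?_⟩
          · rw [ht']; omega
          · rw [Nat.cast_sub hlt.le, hsv, htv]; ring
      obtain ⟨s', hs'1, hs'2, hs'3⟩ := hgoal
      refine key E C j i (Ne.symm hji) hij1 hji1 x hxj hxi (Or.inr ⟨s', hs'1, hs'2, ?_⟩)
      rw [hm]
      congr 1
      linear_combination hs'3
end

section
/- Let H = (V, E) be a hypergraph containing two distinct cycles C₁ and C₂ that share a common vertex. Then H contains two distinct minimal cycles C₁′ and C₂′ that share a common vertex. -/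
variable {V : Type*} [Fintype V] [DecidableEq V] [Nonempty V]

section Aux

lemma zmod_natCast_inj {k : ℕ} [NeZero k] {a b : ℕ} (ha : a < k) (hb : b < k)
    (h : (a : ZMod k) = b) : a = b := by
  have := congrArg ZMod.val h
  rwa [ZMod.val_cast_of_lt ha, ZMod.val_cast_of_lt hb] at this

lemma zmod_cast_val {k : ℕ} [NeZero k] (x : ZMod k) : ((x.val : ℕ) : ZMod k) = x := by
  rw [ZMod.natCast_val, ZMod.cast_id]

/-- generic cycle constructor from a `ℕ`-indexed description -/
@[reducible] def mkCycle (E : Finset (Finset V)) (n : ℕ) (hn : 2 ≤ n)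
    (v : ℕ → V) (e : ℕ → Finset V)
    (hv : ∀ a, a < n → ∀ b, b < n → v a = v b → a = b)
    (he : ∀ a, a < n → ∀ b, b < n → e a = e b → a = b)
    (heE : ∀ a, a < n → e a ∈ E)
    (hl : ∀ a, a < n → v a ∈ e a)
    (hr : ∀ a, a < n → v ((a + 1) % n) ∈ e a) : HCycle E :=
  haveI : NeZero n := ⟨by omega⟩
  { k := n
    two_le := hn
    v := fun i => v i.val
    e := fun i => e i.val
    v_inj := fun i j h => ZMod.val_injective n
      (hv _ (ZMod.val_lt i) _ (ZMod.val_lt j) h)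
    e_inj := fun i j h => ZMod.val_injective n
      (he _ (ZMod.val_lt i) _ (ZMod.val_lt j) h)
    e_mem := fun i => heE _ (ZMod.val_lt i)
    mem_left := fun i => hl _ (ZMod.val_lt i)
    mem_right := fun i => by
      haveI : Fact (1 < n) := ⟨by omega⟩
      show v ((i + 1).val) ∈ e i.val
      have h1 : (i + 1).val = (i.val + 1) % n := by
        rw [ZMod.val_add, ZMod.val_one]
      rw [h1]
      exact hr _ (ZMod.val_lt i) }

set_option linter.unusedSectionVars false in
lemma mkCycle_k (E : Finset (Finset V)) (n hn v e hv he heE hl hr) :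
    (mkCycle E n hn v e hv he heE hl hr).k = n := rfl

set_option linter.unusedSectionVars false in
lemma mkCycle_range (E : Finset (Finset V)) (n hn v e hv he heE hl hr) :
    Set.range (mkCycle E n hn v e hv he heE hl hr).e = {x | ∃ a < n, x = e a} := by
  haveI : NeZero n := ⟨by omega⟩
  ext x
  constructor
  · rintro ⟨i, rfl⟩
    exact ⟨i.val, ZMod.val_lt i, rfl⟩
  · rintro ⟨a, ha, rfl⟩
    refine ⟨(a : ZMod n), ?_⟩
    show e ((a : ZMod n)).val = e a
    rw [ZMod.val_cast_of_lt ha]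

end Aux
lemma arcChord (E : Finset (Finset V)) (C : HCycle E) (a p : ZMod C.k)
    (d : ℕ) (hd1 : 1 ≤ d) (hdk : d < C.k)
    (hvb : C.v (a + (d : ZMod C.k)) ∈ C.e p)
    (hva : C.v a ∈ C.e p)
    (hp : ∀ s : ℕ, s < d → p ≠ a + (s : ZMod C.k)) :
    ∃ A : HCycle E, A.k = d + 1 ∧
      C.e p ∈ Set.range A.e ∧
      (∀ s : ℕ, s < d → C.e (a + (s : ZMod C.k)) ∈ Set.range A.e) ∧
      (∀ x ∈ Set.range A.e, x = C.e p ∨ ∃ s : ℕ, s < d ∧ x = C.e (a + (s : ZMod C.k))) := by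
  haveI : NeZero C.k := ⟨by have := C.two_le; omega⟩
  have h2k := C.two_le
  have key : ∀ s t : ℕ, s < C.k → t < C.k → a + (s:ZMod C.k) = a + (t:ZMod C.k) → s = t := by
    intro s t hs ht h
    exact zmod_natCast_inj hs ht (add_left_cancel h)
  have hv : ∀ s, s < d+1 → ∀ t, t < d+1 →
      C.v (a + (s : ZMod C.k)) = C.v (a + (t : ZMod C.k)) → s = t := by
    intro s hs t ht h
    exact key s t (by omega) (by omega) (C.v_inj h)
  have he : ∀ s, s < d+1 → ∀ t, t < d+1 →
      (if s = d then C.e p else C.e (a + (s : ZMod C.k))) =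
      (if t = d then C.e p else C.e (a + (t : ZMod C.k))) → s = t := by
    intro s hs t ht h
    by_cases hsd : s = d <;> by_cases htd : t = d
    · omega
    · rw [if_pos hsd, if_neg htd] at h
      exact absurd (C.e_inj h) (hp t (by omega))
    · rw [if_neg hsd, if_pos htd] at h
      exact absurd (C.e_inj h.symm) (hp s (by omega))
    · rw [if_neg hsd, if_neg htd] at h
      exact key s t (by omega) (by omega) (C.e_inj h)
  have heE : ∀ t, t < d+1 → (if t = d then C.e p else C.e (a + (t : ZMod C.k))) ∈ E := by
    intro t ht
    split <;> exact C.e_mem _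
  have hl : ∀ t, t < d+1 →
      C.v (a + (t : ZMod C.k)) ∈ (if t = d then C.e p else C.e (a + (t : ZMod C.k))) := by
    intro t ht
    by_cases htd : t = d
    · rw [if_pos htd, htd]; exact hvb
    · rw [if_neg htd]; exact C.mem_left _
  have hr : ∀ t, t < d+1 →
      C.v (a + (((t+1) % (d+1) : ℕ) : ZMod C.k)) ∈
        (if t = d then C.e p else C.e (a + (t : ZMod C.k))) := by
    intro t ht
    by_cases htd : t = d
    · subst htd
      rw [if_pos rfl, Nat.mod_self]
      simpa using hva
    · rw [if_neg htd, Nat.mod_eq_of_lt (by omega)]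
      have h2 : a + ((t+1 : ℕ) : ZMod C.k) = (a + (t : ZMod C.k)) + 1 := by push_cast; ring
      rw [h2]
      exact C.mem_right _
  refine ⟨mkCycle E (d+1) (by omega) _ _ hv he heE hl hr, rfl, ?_, ?_, ?_⟩
  · rw [mkCycle_range]
    exact ⟨d, by omega, (if_pos rfl).symm⟩
  · intro s hs
    rw [mkCycle_range]
    exact ⟨s, by omega, (if_neg (by omega)).symm⟩
  · intro x hx
    rw [mkCycle_range] at hx
    obtain ⟨t, ht, rfl⟩ := hx
    by_cases htd : t = d
    · left; rw [if_pos htd]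
    · right; exact ⟨t, by omega, by rw [if_neg htd]⟩
lemma arcChord2 (E : Finset (Finset V)) (C : HCycle E) (a p q : ZMod C.k) (y : V)
    (d : ℕ) (hd1 : 1 ≤ d) (hdk : d + 1 < C.k)
    (hy : ∀ i, y ≠ C.v i)
    (hyp : y ∈ C.e p) (hyq : y ∈ C.e q) (hpq : p ≠ q)
    (hvb : C.v (a + (d : ZMod C.k)) ∈ C.e q)
    (hva : C.v a ∈ C.e p)
    (hparc : ∀ s : ℕ, s < d → p ≠ a + (s : ZMod C.k))
    (hqarc : ∀ s : ℕ, s < d → q ≠ a + (s : ZMod C.k)) :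
    ∃ A : HCycle E, A.k = d + 2 ∧
      C.e p ∈ Set.range A.e ∧ C.e q ∈ Set.range A.e ∧
      (∀ s : ℕ, s < d → C.e (a + (s : ZMod C.k)) ∈ Set.range A.e) ∧
      (∀ x ∈ Set.range A.e, x = C.e p ∨ x = C.e q ∨
        ∃ s : ℕ, s < d ∧ x = C.e (a + (s : ZMod C.k))) := by
  haveI : NeZero C.k := ⟨by have := C.two_le; omega⟩
  have key : ∀ s t : ℕ, s < C.k → t < C.k →
      a + (s:ZMod C.k) = a + (t:ZMod C.k) → s = t := by
    intro s t hs ht h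
    exact zmod_natCast_inj hs ht (add_left_cancel h)
  have hv : ∀ s, s < d+2 → ∀ t, t < d+2 →
      (if s = d+1 then y else C.v (a + (s : ZMod C.k))) =
      (if t = d+1 then y else C.v (a + (t : ZMod C.k))) → s = t := by
    intro s hs t ht h
    split_ifs at h with h1 h2 h3
    · omega
    · exact absurd h (hy _)
    · exact absurd h.symm (hy _)
    · exact key s t (by omega) (by omega) (C.v_inj h)
  have he : ∀ s, s < d+2 → ∀ t, t < d+2 →
      (if s = d then C.e q else if s = d+1 then C.e p else C.e (a + (s : ZMod C.k))) =
      (if t = d then C.e q else if t = d+1 then C.e p else C.e (a + (t : ZMod C.k))) →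
      s = t := by
    intro s hs t ht h
    split_ifs at h with h1 h2 h3 h4 h5 h6 h7 h8
    · omega
    · exact absurd (C.e_inj h).symm hpq
    · exact absurd (C.e_inj h) (hqarc t (by omega))
    · exact absurd (C.e_inj h) hpq
    · omega
    · exact absurd (C.e_inj h) (hparc t (by omega))
    · exact absurd (C.e_inj h.symm) (hqarc s (by omega))
    · exact absurd (C.e_inj h.symm) (hparc s (by omega))
    · exact key s t (by omega) (by omega) (C.e_inj h)
  have heE : ∀ t, t < d+2 →
      (if t = d then C.e q else if t = d+1 then C.e p else C.e (a + (t : ZMod C.k))) ∈ E := by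
    intro t ht
    split_ifs <;> exact C.e_mem _
  have hl : ∀ t, t < d+2 →
      (if t = d+1 then y else C.v (a + (t : ZMod C.k))) ∈
      (if t = d then C.e q else if t = d+1 then C.e p else C.e (a + (t : ZMod C.k))) := by
    intro t ht
    split_ifs with h1 h2
    · omega
    · rw [h1]; exact hvb
    · exact hyp
    · exact C.mem_left _
  have hr : ∀ t, t < d+2 →
      (if (t+1) % (d+2) = d+1 then y else C.v (a + (((t+1) % (d+2) : ℕ) : ZMod C.k))) ∈
      (if t = d then C.e q else if t = d+1 then C.e p else C.e (a + (t : ZMod C.k))) := by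
    intro t ht
    by_cases h1 : t = d
    · subst h1
      rw [if_pos rfl, Nat.mod_eq_of_lt (by omega), if_pos rfl]
      exact hyq
    · by_cases h2 : t = d+1
      · subst h2
        rw [if_neg (by omega), if_pos rfl, Nat.mod_self, if_neg (by omega)]
        simpa using hva
      · rw [if_neg h1, if_neg h2, Nat.mod_eq_of_lt (by omega), if_neg (by omega)]
        have h3 : a + ((t+1 : ℕ) : ZMod C.k) = (a + (t : ZMod C.k)) + 1 := by
          push_cast; ring
        rw [h3]
        exact C.mem_right _
  refine ⟨mkCycle E (d+2) (by omega) _ _ hv he heE hl hr, rfl, ?_, ?_, ?_, ?_⟩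
  · rw [mkCycle_range]
    exact ⟨d+1, by omega, by rw [if_neg (by omega), if_pos rfl]⟩
  · rw [mkCycle_range]
    exact ⟨d, by omega, by rw [if_pos rfl]⟩
  · intro s hs
    rw [mkCycle_range]
    exact ⟨s, by omega, by rw [if_neg (by omega), if_neg (by omega)]⟩
  · intro x hx
    rw [mkCycle_range] at hx
    obtain ⟨t, ht, rfl⟩ := hx
    by_cases h1 : t = d
    · right; left; rw [if_pos h1]
    · by_cases h2 : t = d+1
      · left; rw [if_neg h1, if_pos h2]
      · right; right
        exact ⟨t, by omega, by rw [if_neg h1, if_neg h2]⟩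
lemma splitCycle (E : Finset (Finset V)) (C : HCycle E) (hC : ¬ IsMinimalCycle C) :
    ∃ A B : HCycle E, A.k < C.k ∧ B.k < C.k ∧
      Set.range A.e ≠ Set.range B.e ∧ ShareVertex A B := by
  haveI : NeZero C.k := ⟨by have := C.two_le; omega⟩
  have h2k := C.two_le
  have hvlt : ∀ x : ZMod C.k, x.val < C.k := ZMod.val_lt
  have key : ∀ (aa : ZMod C.k) (s t : ℕ), s < C.k → t < C.k →
      aa + (s : ZMod C.k) = aa + (t : ZMod C.k) → s = t := by
    intro aa s t hs ht h
    exact zmod_natCast_inj hs ht (add_left_cancel h)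
  unfold IsMinimalCycle at hC
  push_neg at hC
  obtain ⟨i, j, hji, hji1, hij1, hdisj⟩ := hC
  obtain ⟨y, hyi, hyj⟩ := Finset.not_disjoint_iff.mp hdisj
  by_cases hy : ∃ m, y = C.v m
  · -- Chord case: y is a vertex of the cycle
    obtain ⟨m, rfl⟩ := hy
    -- choose p ∈ {i, j} with m ∉ {p, p+1}
    obtain ⟨p, hvmp, hmp, hmp1⟩ :
        ∃ p : ZMod C.k, C.v m ∈ C.e p ∧ m ≠ p ∧ m ≠ p + 1 := by
      by_cases h1 : m = i ∨ m = i + 1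
      · refine ⟨j, hyj, ?_, ?_⟩
        · rcases h1 with rfl | rfl
          · exact fun h => hji h.symm
          · exact fun h => hji1 h.symm
        · rcases h1 with rfl | rfl
          · exact fun h => hij1 h
          · exact fun h => hji (by linear_combination -h)
      · push_neg at h1
        exact ⟨i, hyi, h1.1, h1.2⟩
    set d : ℕ := (m - p).val with hdd
    have hd' : ((d : ℕ) : ZMod C.k) = m - p := zmod_cast_val _
    have hdlt : d < C.k := hvlt _
    have hd0 : d ≠ 0 := by
      intro h
      rw [h] at hd'
      exact hmp (by push_cast at hd'; linear_combination -hd')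
    have hdne1 : d ≠ 1 := by
      intro h
      rw [h] at hd'
      exact hmp1 (by push_cast at hd'; linear_combination -hd')
    have hd2 : 2 ≤ d := by omega
    -- the short side
    obtain ⟨A, hAk, hApmem, hAarc, hAconv⟩ :=
      arcChord E C (p + 1) p (d - 1) (by omega) (by omega)
        (by
          have : p + 1 + ((d - 1 : ℕ) : ZMod C.k) = m := by
            rw [Nat.cast_sub (by omega : 1 ≤ d), hd']
            push_cast
            ring
          rw [this]; exact hvmp)
        (C.mem_right p)
        (by
          intro s hs heq
          have := key p 0 (1 + s) (by omega) (by omega)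
            (by push_cast; linear_combination heq)
          omega)
    have hkd : ((C.k - d : ℕ) : ZMod C.k) = p - m := by
      rw [Nat.cast_sub (by omega : d ≤ C.k), ZMod.natCast_self, hd']
      ring
    -- the long side
    obtain ⟨B, hBk, hBpmem, hBarc, hBconv⟩ :=
      arcChord E C m p (C.k - d) (by omega) (by omega)
        (by
          have : m + ((C.k - d : ℕ) : ZMod C.k) = p := by rw [hkd]; ring
          rw [this]; exact C.mem_left p)
        hvmp
        (by
          intro s hs heq
          have := key m s (C.k - d) (by omega) (by omega)
            (by rw [hkd]; linear_combination -heq)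
          omega)
    refine ⟨A, B, by omega, by omega, ?_, ?_⟩
    · -- distinct ranges: C.e (p+1) is in A but not in B
      intro hEq
      have hmem : C.e (p + 1) ∈ Set.range A.e := by
        have := hAarc 0 (by omega)
        simpa using this
      rw [hEq] at hmem
      rcases hBconv _ hmem with h | ⟨s, hs, h⟩
      · have := key p 1 0 (by omega) (by omega)
          (by push_cast; linear_combination C.e_inj h)
        omega
      · have heq2 : m + (s : ZMod C.k) = m + ((C.k - d + 1 : ℕ) : ZMod C.k) := by
          push_cast
          rw [hkd]
          linear_combination - C.e_inj h
        have := key m s (C.k - d + 1) (by omega) (by omega) heq2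
        omega
    · -- share the vertex C.v m via edge C.e p
      obtain ⟨tA, htA⟩ := hApmem
      obtain ⟨tB, htB⟩ := hBpmem
      exact ⟨C.v m, ⟨tA, by rw [htA]; exact hvmp⟩, ⟨tB, by rw [htB]; exact hvmp⟩⟩
  · -- y is a new vertex: double chord case
    push_neg at hy
    set d : ℕ := (j - i).val with hdd
    have hd' : ((d : ℕ) : ZMod C.k) = j - i := zmod_cast_val _
    have hdlt : d < C.k := hvlt _
    have hd0 : d ≠ 0 := by
      intro h
      rw [h] at hd'
      exact hji (by push_cast at hd'; linear_combination -hd')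
    have hdne1 : d ≠ 1 := by
      intro h
      rw [h] at hd'
      exact hji1 (by push_cast at hd'; linear_combination -hd')
    have hdnek1 : d ≠ C.k - 1 := by
      intro h
      apply hij1
      rw [h, Nat.cast_sub (by omega : 1 ≤ C.k), ZMod.natCast_self] at hd'
      push_cast at hd'
      linear_combination hd'
    have hd2 : 2 ≤ d := by omega
    have hdk2 : d + 2 ≤ C.k := by omega
    obtain ⟨A, hAk, hApmem, hAqmem, hAarc, hAconv⟩ :=
      arcChord2 E C (i + 1) i j y (d - 1) (by omega) (by omega)
        hy hyi hyj (fun h => hji h.symm)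
        (by
          have : i + 1 + ((d - 1 : ℕ) : ZMod C.k) = j := by
            rw [Nat.cast_sub (by omega : 1 ≤ d), hd']
            push_cast
            ring
          rw [this]; exact C.mem_left j)
        (C.mem_right i)
        (by
          intro s hs heq
          have := key i 0 (1 + s) (by omega) (by omega)
            (by push_cast; linear_combination heq)
          omega)
        (by
          intro s hs heq
          have heq2 : i + ((1 + s : ℕ) : ZMod C.k) = i + ((d : ℕ) : ZMod C.k) := by
            rw [hd']
            push_cast
            linear_combination -heq
          have := key i (1 + s) d (by omega) (by omega) heq2
          omega)
    have hkd : ((C.k - d : ℕ) : ZMod C.k) = i - j := by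
      rw [Nat.cast_sub (by omega : d ≤ C.k), ZMod.natCast_self, hd']
      ring
    obtain ⟨B, hBk, hBpmem, hBqmem, hBarc, hBconv⟩ :=
      arcChord2 E C (j + 1) j i y (C.k - d - 1) (by omega) (by omega)
        hy hyj hyi hji
        (by
          have : j + 1 + ((C.k - d - 1 : ℕ) : ZMod C.k) = i := by
            rw [Nat.cast_sub (by omega : 1 ≤ C.k - d), hkd]
            push_cast
            ring
          rw [this]; exact C.mem_left i)
        (C.mem_right j)
        (by
          intro s hs heq
          have := key j 0 (1 + s) (by omega) (by omega)
            (by push_cast; linear_combination heq)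
          omega)
        (by
          intro s hs heq
          have heq2 : j + ((1 + s : ℕ) : ZMod C.k) = j + ((C.k - d : ℕ) : ZMod C.k) := by
            rw [hkd]
            push_cast
            linear_combination -heq
          have := key j (1 + s) (C.k - d) (by omega) (by omega) heq2
          omega)
    refine ⟨A, B, by omega, by omega, ?_, ?_⟩
    · -- distinct ranges: C.e (i+1) in A not in B
      intro hEq
      have hmem : C.e (i + 1) ∈ Set.range A.e := by
        have := hAarc 0 (by omega)
        simpa using this
      rw [hEq] at hmem
      rcases hBconv _ hmem with h | h | ⟨s, hs, h⟩
      · exact hji1 (C.e_inj h).symm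
      · have := key i 1 0 (by omega) (by omega)
          (by push_cast; linear_combination C.e_inj h)
        omega
      · have heq2 : j + ((1 + s : ℕ) : ZMod C.k) = j + ((C.k - d + 1 : ℕ) : ZMod C.k) := by
          push_cast
          rw [hkd]
          linear_combination - C.e_inj h
        have := key j (1 + s) (C.k - d + 1) (by omega) (by omega) heq2
        omega
    · -- share vertex y via edge C.e i
      obtain ⟨tA, htA⟩ := hApmem
      obtain ⟨tB, htB⟩ := hBqmem
      exact ⟨y, ⟨tA, by rw [htA]; exact hyi⟩, ⟨tB, by rw [htB]; exact hyi⟩⟩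
lemma pairAux (E : Finset (Finset V)) : ∀ n : ℕ, ∀ C₁ C₂ : HCycle E,
    C₁.k ≤ n → C₂.k ≤ n →
    Set.range C₁.e ≠ Set.range C₂.e → ShareVertex C₁ C₂ →
    ∃ D₁ D₂ : HCycle E, IsMinimalCycle D₁ ∧ IsMinimalCycle D₂ ∧
      Set.range D₁.e ≠ Set.range D₂.e ∧ ShareVertex D₁ D₂ := by
  intro n
  induction n with
  | zero =>
    intro C₁ _ h₁ _ _ _
    have := C₁.two_le
    omega
  | succ n ih =>
    intro C₁ C₂ h₁ h₂ hne hsh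
    by_cases m₁ : IsMinimalCycle C₁
    · by_cases m₂ : IsMinimalCycle C₂
      · exact ⟨C₁, C₂, m₁, m₂, hne, hsh⟩
      · obtain ⟨A, B, hA, hB, hAB, hshAB⟩ := splitCycle E C₂ m₂
        exact ih A B (by omega) (by omega) hAB hshAB
    · obtain ⟨A, B, hA, hB, hAB, hshAB⟩ := splitCycle E C₁ m₁
      exact ih A B (by omega) (by omega) hAB hshAB

/-- If a hypergraph has two distinct cycles sharing a common
vertex, then it has two distinct minimal cycles sharing a common vertex. -/
theorem stmt8 (E : Finset (Finset V)) (C₁ C₂ : HCycle E)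
    (hne : Set.range C₁.e ≠ Set.range C₂.e) (hshare : ShareVertex C₁ C₂) :
    ∃ D₁ D₂ : HCycle E, IsMinimalCycle D₁ ∧ IsMinimalCycle D₂ ∧
      Set.range D₁.e ≠ Set.range D₂.e ∧ ShareVertex D₁ D₂ := by
  exact pairAux E (max C₁.k C₂.k) C₁ C₂ (le_max_left _ _) (le_max_right _ _) hne hshare
end
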